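/- arXiv:1410.4154 — 5 statements merged into one kernel-verified Lean document; each statement's English description precedes it below -/
import Mathlib

section
/- For every Nash equilibrium (respectively, leader strategy profile) σ of an MDSG, there exists a Nash equilibrium (respectively, leader strategy profile) σ' with the same outcome plays (π_{σ'}(v) = π_σ(v) for every vertex v with Δ(v) > 0, hence E_p(σ') = E_p(σ) for all players p) that is a reward-and-punish strategy profile: on every history that deviates from the outcome plays, each player's action depends only on the current vertex and on the identity of the first player who deviated (i.e., after the first deviation by a player p, all other players follow a fixed positional strategy depending only on p). -/
open scoped BigOperators

/-- A multi-player discounted sum game (MDSG) on sets of players `P`,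
vertices `V` and actions `A`, all required to be finite (`A` nonempty).
The `owner` of a vertex chooses the action there; `tr` is the transition
function, `rew p v a` is the reward of player `p` for taking action `a`
at vertex `v`, `init` is the initial probability distribution on the
vertices, and `disc` is the discount factor. -/
structure MDSG (P V A : Type) : Type where
  fin_P : Finite P
  fin_V : Finite V
  fin_A : Finite A
  nonempty_A : Nonempty A
  owner : V → P
  tr : V → A → V
  rew : P → V → A → ℝ
  init : V → ℝ
  init_nonneg : ∀ v, 0 ≤ init v
  init_sum : ∑' v, init v = 1
  disc : ℝ
  disc_pos : 0 < disc
  disc_lt_one : disc < 1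

/-- A pure strategy profile: given the history (the list of vertex/action pairs
seen so far) and the current vertex, the owner of the current vertex chooses
an action.  The strategy of an individual player `p` is the restriction of the
profile to the vertices owned by `p`. -/
abbrev Profile (V A : Type) : Type := List (V × A) → V → A

namespace MDSG

variable {P V A : Type}

/-- The pair (history, current vertex) after `n` steps of the play of `σ` from `v`. -/
def histState (G : MDSG P V A) (σ : Profile V A) (v : V) : ℕ → List (V × A) × V
  | 0 => ([], v)
  | n + 1 =>
    let s := G.histState σ v n
    (s.1 ++ [(s.2, σ s.1 s.2)], G.tr s.2 (σ s.1 s.2))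

/-- The vertex visited at step `n` of the play of `σ` from `v`. -/
def playV (G : MDSG P V A) (σ : Profile V A) (v : V) (n : ℕ) : V :=
  (G.histState σ v n).2

/-- The action taken at step `n` of the play of `σ` from `v`. -/
def playA (G : MDSG P V A) (σ : Profile V A) (v : V) (n : ℕ) : A :=
  σ (G.histState σ v n).1 (G.playV σ v n)

/-- The discounted reward of player `p` on the play of `σ` from `v`. -/
noncomputable def reward (G : MDSG P V A) (p : P) (σ : Profile V A) (v : V) : ℝ :=
  ∑' i : ℕ, G.rew p (G.playV σ v i) (G.playA σ v i) * G.disc ^ i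

/-- The expected reward of player `p` under the strategy profile `σ`. -/
noncomputable def ER (G : MDSG P V A) (p : P) (σ : Profile V A) : ℝ :=
  ∑' v : V, G.init v * G.reward p σ v

/-- `σ'` differs from `σ` at most in the strategy of player `p`. -/
def DiffOnly (G : MDSG P V A) (σ σ' : Profile V A) (p : P) : Prop :=
  ∀ h v, G.owner v ≠ p → σ' h v = σ h v

/-- Nash equilibrium: no player can profit from a unilateral deviation. -/
def IsNash (G : MDSG P V A) (σ : Profile V A) : Prop :=
  ∀ p σ', G.DiffOnly σ σ' p → G.ER p σ' ≤ G.ER p σ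

/-- Leader strategy profile: no player other than the leader `l` can profit
from a unilateral deviation. -/
def IsLeaderSP (G : MDSG P V A) (l : P) (σ : Profile V A) : Prop :=
  ∀ p, p ≠ l → ∀ σ', G.DiffOnly σ σ' p → G.ER p σ' ≤ G.ER p σ

/-- `σ` is a (pure) strategy profile with memory bound `b`: there is a memory
set `M` with `|M| ≤ b`, an initial memory state, a memory update function and
a usage function producing all the actions of `σ`. -/
def MemBound (G : MDSG P V A) (σ : Profile V A) (b : ℕ) : Prop :=
  ∃ n : ℕ, n ≤ b ∧ ∃ (m₀ : Fin n) (μ : Fin n → V × A → Fin n) (u : Fin n → V → A),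
    ∀ h v, σ h v = u (h.foldl μ m₀) v

/-- `σ` is memoryless (positional): actions depend only on the current vertex. -/
def Positional (G : MDSG P V A) (σ : Profile V A) : Prop :=
  ∀ h h' v, σ h v = σ h' v

open Classical in
/-- Combination of a strategy for player `p` with a joint strategy of the other players. -/
noncomputable def combine (G : MDSG P V A) (p : P) (τp τo : Profile V A) : Profile V A :=
  fun h v => if G.owner v = p then τp h v else τo h v

/-- The lower value of player `p` at vertex `v`: the supremum over the pure
strategies of `p` of the infimum over the joint pure strategies of the other
players of the reward of `p` on the resulting play from `v`. -/
noncomputable def lowerValue (G : MDSG P V A) (p : P) (v : V) : ℝ :=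
  ⨆ τp : Profile V A, ⨅ τo : Profile V A, G.reward p (G.combine p τp τo) v

/-- The upper value of player `p` at vertex `v`. -/
noncomputable def upperValue (G : MDSG P V A) (p : P) (v : V) : ℝ :=
  ⨅ τo : Profile V A, ⨆ τp : Profile V A, G.reward p (G.combine p τp τo) v

/-- The history `h` contains a deviation from `σ` at position `i`. -/
def DeviatesAt (G : MDSG P V A) (σ : Profile V A) (h : List (V × A)) (i : ℕ) : Prop :=
  ∃ hi : i < h.length, (h.get ⟨i, hi⟩).2 ≠ σ (h.take i) (h.get ⟨i, hi⟩).1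

/-- Reward-and-punish profile: on every history that deviates from the
prescribed actions, every action depends only on the current vertex and on the
identity of the first player who deviated (all players follow a fixed
positional strategy depending only on the first deviator). -/
def IsRewardPunish (G : MDSG P V A) (σ : Profile V A) : Prop :=
  ∃ punish : P → V → A, ∀ (h : List (V × A)) (i : ℕ) (hi : i < h.length),
    G.DeviatesAt σ h i → (∀ j, j < i → ¬ G.DeviatesAt σ h j) →
    ∀ v, σ h v = punish (G.owner (h.get ⟨i, hi⟩).1) v

/-- The outcome plays of `σ` are generated with compliance memory bound `b`:
on every history on which all players have complied, the actions of `σ` are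
produced by a memory structure with at most `b` states. -/
def ComplianceMemBound (G : MDSG P V A) (σ : Profile V A) (b : ℕ) : Prop :=
  ∃ n : ℕ, n ≤ b ∧ ∃ (m₀ : Fin n) (μ : Fin n → V × A → Fin n) (u : Fin n → V → A),
    ∀ h : List (V × A), (∀ i, ¬ G.DeviatesAt σ h i) →
      ∀ v, σ h v = u (h.foldl μ m₀) v

/-- The set of stationary mixed decision vectors: an assignment of a
probability distribution over the actions to every vertex. -/
def simplexD (V A : Type) : Set (V → A → ℝ) :=
  {d | ∀ v, (∀ a, 0 ≤ d v a) ∧ ∑' a, d v a = 1}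

end MDSG
namespace MDSG
variable {P V A : Type} (G : MDSG P V A)

lemma histState_length (σ : Profile V A) (v : V) :
    ∀ n, (G.histState σ v n).1.length = n := by
  intro n; induction n with
  | zero => rfl
  | succ n ih => simp [histState, ih]

lemma histState_take (σ : Profile V A) (v : V) :
    ∀ {m n : ℕ}, m ≤ n → (G.histState σ v n).1.take m = (G.histState σ v m).1 := by
  intro m n hmn
  induction n with
  | zero =>
    rw [Nat.le_zero.mp hmn]; rfl
  | succ n ih =>
    rcases Nat.lt_or_ge m (n+1) with h | h
    · have hm : m ≤ n := Nat.lt_succ_iff.mp h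
      rw [show (G.histState σ v (n+1)).1
          = (G.histState σ v n).1 ++ [((G.histState σ v n).2, σ (G.histState σ v n).1 (G.histState σ v n).2)] from rfl]
      rw [List.take_append_of_le_length (by rw [G.histState_length]; exact hm)]
      exact ih hm
    · have : m = n+1 := le_antisymm hmn h
      subst this
      rw [List.take_of_length_le (by rw [G.histState_length])]

/-- Shift a profile by a history prefix. -/
def shiftP (σ : Profile V A) (g : List (V × A)) : Profile V A := fun h u => σ (g ++ h) u

lemma histState_shift (σ : Profile V A) (v : V) (k : ℕ) :
    ∀ n, G.histState σ v (k+n)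
      = ((G.histState σ v k).1 ++ (G.histState (shiftP σ (G.histState σ v k).1) (G.playV σ v k) n).1,
         (G.histState (shiftP σ (G.histState σ v k).1) (G.playV σ v k) n).2) := by
  intro n
  induction n with
  | zero => simp [histState, playV]
  | succ n ih =>
    show G.histState σ v (k+n+1) = _
    rw [show G.histState σ v (k+n+1)
        = ((G.histState σ v (k+n)).1 ++ [((G.histState σ v (k+n)).2, σ (G.histState σ v (k+n)).1 (G.histState σ v (k+n)).2)],
           G.tr (G.histState σ v (k+n)).2 (σ (G.histState σ v (k+n)).1 (G.histState σ v (k+n)).2)) from rfl]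
    rw [ih]
    simp [histState, shiftP]

lemma playV_shift (σ : Profile V A) (v : V) (k n : ℕ) :
    G.playV σ v (k+n) = G.playV (shiftP σ (G.histState σ v k).1) (G.playV σ v k) n := by
  unfold playV; rw [G.histState_shift]; rfl

lemma playA_shift (σ : Profile V A) (v : V) (k n : ℕ) :
    G.playA σ v (k+n) = G.playA (shiftP σ (G.histState σ v k).1) (G.playV σ v k) n := by
  unfold playA playV
  rw [G.histState_shift]
  rfl

lemma exists_rew_bound (p : P) : ∃ R : ℝ, 0 ≤ R ∧ ∀ v a, |G.rew p v a| ≤ R := by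
  haveI := G.fin_V; haveI := G.fin_A
  obtain ⟨R, hR⟩ := (Set.finite_range (fun x : V × A => |G.rew p x.1 x.2|)).bddAbove
  refine ⟨max R 0, le_max_right _ _, fun v a => ?_⟩
  exact le_trans (hR ⟨(v,a), rfl⟩) (le_max_left _ _)

lemma summable_aux {R : ℝ} {f : ℕ → ℝ} (hf : ∀ i, |f i| ≤ R) :
    Summable fun i => f i * G.disc ^ i := by
  have hd0 := G.disc_pos.le
  refine Summable.of_abs (Summable.of_nonneg_of_le (fun i => abs_nonneg _) (fun i => ?_)
    ((summable_geometric_of_lt_one hd0 G.disc_lt_one).mul_left R))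
  rw [abs_mul, abs_pow, abs_of_nonneg hd0]
  exact mul_le_mul_of_nonneg_right (hf i) (pow_nonneg hd0 i)

lemma summable_reward (p : P) (σ : Profile V A) (v : V) :
    Summable fun i => G.rew p (G.playV σ v i) (G.playA σ v i) * G.disc ^ i := by
  obtain ⟨R, -, hR⟩ := G.exists_rew_bound p
  exact G.summable_aux (fun i => hR _ _)

lemma reward_split (p : P) (σ : Profile V A) (v : V) (k : ℕ) :
    G.reward p σ v = (∑ i ∈ Finset.range k, G.rew p (G.playV σ v i) (G.playA σ v i) * G.disc ^ i)
      + G.disc ^ k * G.reward p (shiftP σ (G.histState σ v k).1) (G.playV σ v k) := by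
  have hs := G.summable_reward p σ v
  have := (Summable.sum_add_tsum_nat_add (f := fun i => G.rew p (G.playV σ v i) (G.playA σ v i) * G.disc ^ i) k hs).symm
  rw [reward, this]
  congr 1
  have : ∀ i, G.rew p (G.playV σ v (i+k)) (G.playA σ v (i+k)) * G.disc ^ (i+k)
      = G.disc ^ k * (G.rew p (G.playV (shiftP σ (G.histState σ v k).1) (G.playV σ v k) i)
          (G.playA (shiftP σ (G.histState σ v k).1) (G.playV σ v k) i) * G.disc ^ i) := by
    intro i
    rw [show i + k = k + i from Nat.add_comm i k, G.playV_shift, G.playA_shift, pow_add]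
    ring
  rw [tsum_congr this, tsum_mul_left]
  rfl

lemma reward_step (p : P) (σ : Profile V A) (v : V) :
    G.reward p σ v = G.rew p v (σ [] v)
      + G.disc * G.reward p (shiftP σ [(v, σ [] v)]) (G.tr v (σ [] v)) := by
  have := G.reward_split p σ v 1
  simpa [playV, playA, histState] using this

end MDSG
namespace MDSG
section Bellman
variable {P V A : Type} [Fintype V] [Fintype A] [Nonempty A] (G : MDSG P V A)

/-- One-step value of action `a` at vertex `v` for player `p`, continuation `f`. -/
noncomputable def Qv (p : P) (f : V → ℝ) (v : V) (a : A) : ℝ :=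
  G.rew p v a + G.disc * f (G.tr v a)

open Classical in
/-- Bellman operator for the zero-sum game of `p` against the rest. -/
noncomputable def bell (p : P) (f : V → ℝ) : V → ℝ := fun v =>
  if G.owner v = p then Finset.univ.sup' Finset.univ_nonempty (G.Qv p f v)
  else Finset.univ.inf' Finset.univ_nonempty (G.Qv p f v)

lemma abs_sup'_sub_le {ι : Type*} (s : Finset ι) (hs : s.Nonempty) (F H : ι → ℝ) (c : ℝ)
    (h : ∀ a ∈ s, |F a - H a| ≤ c) : |s.sup' hs F - s.sup' hs H| ≤ c := by
  rw [abs_sub_le_iff]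
  constructor
  · rw [sub_le_iff_le_add]
    refine Finset.sup'_le _ _ fun a ha => ?_
    have := abs_sub_le_iff.mp (h a ha)
    have h2 := Finset.le_sup' H ha
    linarith [this.1]
  · rw [sub_le_iff_le_add]
    refine Finset.sup'_le _ _ fun a ha => ?_
    have := abs_sub_le_iff.mp (h a ha)
    have h2 := Finset.le_sup' F ha
    linarith [this.2]

lemma abs_inf'_sub_le {ι : Type*} (s : Finset ι) (hs : s.Nonempty) (F H : ι → ℝ) (c : ℝ)
    (h : ∀ a ∈ s, |F a - H a| ≤ c) : |s.inf' hs F - s.inf' hs H| ≤ c := by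
  rw [abs_sub_le_iff]
  constructor
  · obtain ⟨a, ha, hEq⟩ := Finset.exists_mem_eq_inf' hs H
    have h1 := Finset.inf'_le F ha
    have h2 := abs_sub_le_iff.mp (h a ha)
    rw [hEq]
    linarith [h2.1]
  · obtain ⟨a, ha, hEq⟩ := Finset.exists_mem_eq_inf' hs F
    have h1 := Finset.inf'_le H ha
    have h2 := abs_sub_le_iff.mp (h a ha)
    rw [hEq]
    linarith [h2.2]

lemma bell_contract (p : P) : ContractingWith ⟨G.disc, G.disc_pos.le⟩ (G.bell p) := by
  constructor
  · exact_mod_cast G.disc_lt_one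
  · apply LipschitzWith.of_dist_le_mul
    intro f g
    have hd0 := G.disc_pos.le
    have hnn : (0:ℝ) ≤ G.disc * dist f g := mul_nonneg hd0 dist_nonneg
    change dist (G.bell p f) (G.bell p g) ≤ G.disc * dist f g
    rw [dist_pi_le_iff hnn]
    intro v
    rw [Real.dist_eq]
    have hQ : ∀ a ∈ Finset.univ, |G.Qv p f v a - G.Qv p g v a| ≤ G.disc * dist f g := by
      intro a _
      have : G.Qv p f v a - G.Qv p g v a = G.disc * (f (G.tr v a) - g (G.tr v a)) := by
        simp [Qv]; ring
      rw [this, abs_mul, abs_of_nonneg hd0]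
      refine mul_le_mul_of_nonneg_left ?_ hd0
      rw [← Real.dist_eq]
      exact dist_le_pi_dist f g _
    unfold bell
    by_cases ho : G.owner v = p
    · simp only [ho, if_true]
      exact abs_sup'_sub_le _ _ _ _ _ hQ
    · simp only [ho, if_false]
      exact abs_inf'_sub_le _ _ _ _ _ hQ

/-- The (minmax) value of player `p`. -/
noncomputable def val (p : P) : V → ℝ :=
  ContractingWith.fixedPoint (G.bell p) (G.bell_contract p)

lemma val_fix (p : P) : G.bell p (G.val p) = G.val p :=
  ContractingWith.fixedPoint_isFixedPt (G.bell_contract p)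

lemma val_eq_sup (p : P) (v : V) (h : G.owner v = p) :
    G.val p v = Finset.univ.sup' Finset.univ_nonempty (G.Qv p (G.val p) v) := by
  conv_lhs => rw [← G.val_fix p]
  simp [bell, h]

lemma val_eq_inf (p : P) (v : V) (h : G.owner v ≠ p) :
    G.val p v = Finset.univ.inf' Finset.univ_nonempty (G.Qv p (G.val p) v) := by
  conv_lhs => rw [← G.val_fix p]
  simp [bell, h]

lemma Q_le_val (p : P) (v : V) (h : G.owner v = p) (a : A) :
    G.Qv p (G.val p) v a ≤ G.val p v := by
  rw [G.val_eq_sup p v h]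
  exact Finset.le_sup' _ (Finset.mem_univ a)

lemma val_le_Q (p : P) (v : V) (h : G.owner v ≠ p) (a : A) :
    G.val p v ≤ G.Qv p (G.val p) v a := by
  rw [G.val_eq_inf p v h]
  exact Finset.inf'_le _ (Finset.mem_univ a)

/-- An action of `p` attaining the sup. -/
noncomputable def bestA (p : P) (v : V) : A :=
  (Finset.exists_mem_eq_sup' (Finset.univ_nonempty) (G.Qv p (G.val p) v)).choose

lemma bestA_spec (p : P) (v : V) :
    Finset.univ.sup' Finset.univ_nonempty (G.Qv p (G.val p) v) = G.Qv p (G.val p) v (G.bestA p v) :=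
  (Finset.exists_mem_eq_sup' (Finset.univ_nonempty) (G.Qv p (G.val p) v)).choose_spec.2

/-- A punishing action against `p` attaining the inf. -/
noncomputable def punishA (p : P) (v : V) : A :=
  (Finset.exists_mem_eq_inf' (Finset.univ_nonempty) (G.Qv p (G.val p) v)).choose

lemma punishA_spec (p : P) (v : V) :
    Finset.univ.inf' Finset.univ_nonempty (G.Qv p (G.val p) v) = G.Qv p (G.val p) v (G.punishA p v) :=
  (Finset.exists_mem_eq_inf' (Finset.univ_nonempty) (G.Qv p (G.val p) v)).choose_spec.2

lemma val_le_Q_best (p : P) (v : V) (h : G.owner v = p) :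
    G.val p v = G.Qv p (G.val p) v (G.bestA p v) := by
  rw [G.val_eq_sup p v h, G.bestA_spec]

lemma val_eq_Q_punish (p : P) (v : V) (h : G.owner v ≠ p) :
    G.val p v = G.Qv p (G.val p) v (G.punishA p v) := by
  rw [G.val_eq_inf p v h, G.punishA_spec]

end Bellman
end MDSG
namespace MDSG
section Steps
variable {P V A : Type} [Fintype V] [Fintype A] [Nonempty A] (G : MDSG P V A)

/-- Along the play of `σ` from `v`, every vertex not owned by `p` plays `punishA`. -/
def PComp (p : P) (σ : Profile V A) (v : V) : Prop :=
  ∀ n, G.owner (G.playV σ v n) ≠ p → G.playA σ v n = G.punishA p (G.playV σ v n)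

/-- Along the play of `σ` from `v`, every vertex owned by `p` plays `bestA`. -/
def BComp (p : P) (σ : Profile V A) (v : V) : Prop :=
  ∀ n, G.owner (G.playV σ v n) = p → G.playA σ v n = G.bestA p (G.playV σ v n)

lemma PComp_shift {p : P} {σ : Profile V A} {v : V} (h : G.PComp p σ v) (k : ℕ) :
    G.PComp p (shiftP σ (G.histState σ v k).1) (G.playV σ v k) := by
  intro n
  rw [← G.playV_shift, ← G.playA_shift]
  exact h (k + n)

lemma BComp_shift {p : P} {σ : Profile V A} {v : V} (h : G.BComp p σ v) (k : ℕ) :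
    G.BComp p (shiftP σ (G.histState σ v k).1) (G.playV σ v k) := by
  intro n
  rw [← G.playV_shift, ← G.playA_shift]
  exact h (k + n)

lemma exists_reward_bound (p : P) : ∃ B : ℝ, ∀ σ v, |G.reward p σ v| ≤ B := by
  obtain ⟨R, hR0, hR⟩ := G.exists_rew_bound p
  refine ⟨R * (1 - G.disc)⁻¹, fun σ v => ?_⟩
  have hd0 := G.disc_pos.le
  have hsum := G.summable_reward p σ v
  have hgeo := (summable_geometric_of_lt_one hd0 G.disc_lt_one).mul_left R
  calc |G.reward p σ v| ≤ ∑' i, |G.rew p (G.playV σ v i) (G.playA σ v i) * G.disc ^ i| := by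
        simp only [← Real.norm_eq_abs]
        exact norm_tsum_le_tsum_norm (by simpa [Real.norm_eq_abs, abs_mul, abs_pow] using hsum.abs)
    _ ≤ ∑' i, R * G.disc ^ i := by
        refine Summable.tsum_le_tsum (fun i => ?_) hsum.abs hgeo
        rw [abs_mul, abs_pow, abs_of_nonneg hd0]
        exact mul_le_mul_of_nonneg_right (hR _ _) (pow_nonneg hd0 i)
    _ = R * (1 - G.disc)⁻¹ := by
        rw [tsum_mul_left, tsum_geometric_of_lt_one hd0 G.disc_lt_one]

lemma exists_val_bound (p : P) : ∃ C : ℝ, ∀ v, |G.val p v| ≤ C := by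
  obtain ⟨C, hC⟩ := (Set.finite_range (fun v => |G.val p v|)).bddAbove
  exact ⟨C, fun v => hC ⟨v, rfl⟩⟩

lemma reward_le_val (p : P) (σ : Profile V A) (v : V) (h : G.PComp p σ v) :
    G.reward p σ v ≤ G.val p v := by
  obtain ⟨B, hB⟩ := G.exists_reward_bound p
  obtain ⟨C, hC⟩ := G.exists_val_bound p
  set Sset : Set ℝ := {x | ∃ σ' v', G.PComp p σ' v' ∧ x = G.reward p σ' v' - G.val p v'} with hSdef
  have hmem : ∀ {σ' v'}, G.PComp p σ' v' → G.reward p σ' v' - G.val p v' ∈ Sset :=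
    fun {σ'} {v'} hc => ⟨σ', v', hc, rfl⟩
  have hne : Sset.Nonempty := ⟨_, hmem h⟩
  have hbdd : BddAbove Sset := by
    refine ⟨B + C, fun x hx => ?_⟩
    obtain ⟨σ', v', -, rfl⟩ := hx
    have := abs_le.mp (hB σ' v')
    have := abs_le.mp (hC v')
    linarith [(abs_le.mp (hB σ' v')).2, (abs_le.mp (hC v')).1]
  have key : ∀ x ∈ Sset, x ≤ G.disc * sSup Sset := by
    rintro x ⟨σ', w, hc, rfl⟩
    have hstep := G.reward_step p σ' w
    set a₀ := σ' [] w with ha₀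
    set w₁ := G.tr w a₀ with hw₁
    set σ₁ := shiftP σ' [(w, a₀)] with hσ₁
    have hc1 : G.PComp p σ₁ w₁ := by
      have := G.PComp_shift hc 1
      simpa [histState, playV, playA, ← ha₀] using this
    have h1 : G.reward p σ₁ w₁ - G.val p w₁ ≤ sSup Sset := le_csSup hbdd (hmem hc1)
    have h2 : G.rew p w a₀ + G.disc * G.val p w₁ ≤ G.val p w := by
      by_cases ho : G.owner w = p
      · simpa [Qv] using G.Q_le_val p w ho a₀
      · have ha : a₀ = G.punishA p w := hc 0 ho
        rw [ha]
        simpa [Qv, hw₁, ha] using (G.val_eq_Q_punish p w ho).ge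
    have h3 : G.disc * (G.reward p σ₁ w₁ - G.val p w₁) ≤ G.disc * sSup Sset :=
      mul_le_mul_of_nonneg_left h1 G.disc_pos.le
    rw [hstep]
    nlinarith [G.disc_pos]
  have hS : sSup Sset ≤ G.disc * sSup Sset := csSup_le hne key
  have hS0 : sSup Sset ≤ 0 := by nlinarith [G.disc_lt_one]
  have := le_csSup hbdd (hmem h)
  linarith

lemma val_le_reward (p : P) (σ : Profile V A) (v : V) (h : G.BComp p σ v) :
    G.val p v ≤ G.reward p σ v := by
  obtain ⟨B, hB⟩ := G.exists_reward_bound p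
  obtain ⟨C, hC⟩ := G.exists_val_bound p
  set Sset : Set ℝ := {x | ∃ σ' v', G.BComp p σ' v' ∧ x = G.val p v' - G.reward p σ' v'} with hSdef
  have hmem : ∀ {σ' v'}, G.BComp p σ' v' → G.val p v' - G.reward p σ' v' ∈ Sset :=
    fun {σ'} {v'} hc => ⟨σ', v', hc, rfl⟩
  have hne : Sset.Nonempty := ⟨_, hmem h⟩
  have hbdd : BddAbove Sset := by
    refine ⟨B + C, fun x hx => ?_⟩
    obtain ⟨σ', v', -, rfl⟩ := hx
    linarith [(abs_le.mp (hB σ' v')).1, (abs_le.mp (hC v')).2]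
  have key : ∀ x ∈ Sset, x ≤ G.disc * sSup Sset := by
    rintro x ⟨σ', w, hc, rfl⟩
    have hstep := G.reward_step p σ' w
    set a₀ := σ' [] w with ha₀
    set w₁ := G.tr w a₀ with hw₁
    set σ₁ := shiftP σ' [(w, a₀)] with hσ₁
    have hc1 : G.BComp p σ₁ w₁ := by
      have := G.BComp_shift hc 1
      simpa [histState, playV, playA, ← ha₀] using this
    have h1 : G.val p w₁ - G.reward p σ₁ w₁ ≤ sSup Sset := le_csSup hbdd (hmem hc1)
    have h2 : G.val p w ≤ G.rew p w a₀ + G.disc * G.val p w₁ := by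
      by_cases ho : G.owner w = p
      · have ha : a₀ = G.bestA p w := hc 0 ho
        rw [ha]
        simpa [Qv, hw₁, ha] using (G.val_le_Q_best p w ho).le
      · simpa [Qv] using G.val_le_Q p w ho a₀
    have h3 : G.disc * (G.val p w₁ - G.reward p σ₁ w₁) ≤ G.disc * sSup Sset :=
      mul_le_mul_of_nonneg_left h1 G.disc_pos.le
    rw [hstep]
    nlinarith [G.disc_pos]
  have hS : sSup Sset ≤ G.disc * sSup Sset := csSup_le hne key
  have hS0 : sSup Sset ≤ 0 := by nlinarith [G.disc_lt_one]
  have := le_csSup hbdd (hmem h)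
  linarith

end Steps
end MDSG
namespace MDSG
section RP
variable {P V A : Type} [Fintype V] [Fintype A] [Nonempty A] (G : MDSG P V A)

lemma deviatesAt_lt {σ : Profile V A} {h : List (V × A)} {i : ℕ}
    (hd : G.DeviatesAt σ h i) : i < h.length := hd.1

lemma deviatesAt_take (σ : Profile V A) (h : List (V × A)) {j m : ℕ} (hm : m < j) :
    G.DeviatesAt σ (h.take j) m ↔ G.DeviatesAt σ h m := by
  have htt : (h.take j).take m = h.take m := by
    rw [List.take_take]; congr 1; omega
  unfold DeviatesAt
  constructor
  · rintro ⟨hi, hne⟩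
    have hlen : m < h.length := by
      have := hi; rw [List.length_take] at this; omega
    refine ⟨hlen, ?_⟩
    rw [htt] at hne
    simpa [List.get_eq_getElem, List.getElem_take] using hne
  · rintro ⟨hi, hne⟩
    have hlen : m < (h.take j).length := by
      rw [List.length_take]; omega
    refine ⟨hlen, ?_⟩
    rw [htt]
    simpa [List.get_eq_getElem, List.getElem_take] using hne

open Classical in
/-- The reward-and-punish modification of `σ`. -/
noncomputable def rpProfile (σ : Profile V A) : Profile V A := fun h u =>
  if hd : ∃ i, G.DeviatesAt σ h i then
    G.punishA (G.owner ((h.get ⟨Nat.find hd, G.deviatesAt_lt (Nat.find_spec hd)⟩)).1) u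
  else σ h u

lemma rp_eq_of_comp {σ : Profile V A} {h : List (V × A)}
    (hcomp : ∀ i, ¬ G.DeviatesAt σ h i) (u : V) : G.rpProfile σ h u = σ h u := by
  unfold rpProfile
  rw [dif_neg (not_exists.mpr hcomp)]

lemma rp_take_eq (σ : Profile V A) (h : List (V × A)) (j : ℕ)
    (hj : ∀ m < j, ¬ G.DeviatesAt σ h m) (u : V) :
    G.rpProfile σ (h.take j) u = σ (h.take j) u := by
  refine G.rp_eq_of_comp (fun i hi => ?_) u
  have hlt : i < j := by
    have := G.deviatesAt_lt hi
    rw [List.length_take] at this; omega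
  exact hj i hlt ((G.deviatesAt_take σ h hlt).mp hi)

lemma dev_rp_iff (σ : Profile V A) (h : List (V × A)) (j : ℕ)
    (hj : ∀ m < j, ¬ G.DeviatesAt σ h m) :
    G.DeviatesAt (G.rpProfile σ) h j ↔ G.DeviatesAt σ h j := by
  unfold DeviatesAt
  constructor
  · rintro ⟨hi, hne⟩
    exact ⟨hi, by rwa [G.rp_take_eq σ h j hj] at hne⟩
  · rintro ⟨hi, hne⟩
    exact ⟨hi, by rwa [← G.rp_take_eq σ h j hj] at hne⟩

lemma rp_isRP (σ : Profile V A) : G.IsRewardPunish (G.rpProfile σ) := by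
  classical
  refine ⟨G.punishA, fun h i hi hdev hmin v => ?_⟩
  have hσmin : ∀ m, m < i → ¬ G.DeviatesAt σ h m := by
    intro m
    induction m using Nat.strong_induction_on with
    | _ m ih =>
      intro hm hdevm
      exact hmin m hm ((G.dev_rp_iff σ h m (fun m' hm' => ih m' hm' (hm'.trans hm))).mpr hdevm)
  have hdevσ : G.DeviatesAt σ h i := (G.dev_rp_iff σ h i hσmin).mp hdev
  have hd : ∃ m, G.DeviatesAt σ h m := ⟨i, hdevσ⟩
  have hfind : Nat.find hd = i := by
    refine le_antisymm (Nat.find_min' hd hdevσ) ?_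
    by_contra hlt
    push_neg at hlt
    exact hσmin _ hlt (Nat.find_spec hd)
  have hget : h.get ⟨Nat.find hd, G.deviatesAt_lt (Nat.find_spec hd)⟩ = h.get ⟨i, hi⟩ := by
    congr 1
    exact Fin.ext hfind
  unfold rpProfile
  rw [dif_pos hd, hget]

lemma rp_histState (σ : Profile V A) (v : V) :
    ∀ n, G.histState (G.rpProfile σ) v n = G.histState σ v n ∧
      ∀ i, ¬ G.DeviatesAt σ (G.histState σ v n).1 i := by
  intro n
  induction n with
  | zero =>
    refine ⟨rfl, fun i hi => ?_⟩
    have := G.deviatesAt_lt hi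
    simp [histState] at this
  | succ n ih =>
    obtain ⟨he, hc⟩ := ih
    set h := (G.histState σ v n).1 with hh
    set u := (G.histState σ v n).2 with hu
    have hrp : G.rpProfile σ h u = σ h u := G.rp_eq_of_comp hc u
    have hlen : h.length = n := G.histState_length σ v n
    constructor
    · show ((G.histState (G.rpProfile σ) v n).1 ++ [((G.histState (G.rpProfile σ) v n).2,
          G.rpProfile σ (G.histState (G.rpProfile σ) v n).1 (G.histState (G.rpProfile σ) v n).2)],
          G.tr (G.histState (G.rpProfile σ) v n).2 _) = _
      rw [he]
      show (h ++ [(u, G.rpProfile σ h u)], G.tr u (G.rpProfile σ h u)) = _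
      rw [hrp]
      rfl
    · intro i hi
      have hilen := G.deviatesAt_lt hi
      have hlen' : (G.histState σ v (n+1)).1 = h ++ [(u, σ h u)] := rfl
      rw [hlen'] at hi hilen
      simp only [List.length_append, List.length_cons, List.length_nil, hlen] at hilen
      obtain ⟨hi', hne⟩ := hi
      rcases Nat.lt_or_ge i n with hcase | hcase
      · refine hc i ⟨by omega, ?_⟩
        have hget : (h ++ [(u, σ h u)]).get ⟨i, hi'⟩ = h.get ⟨i, by omega⟩ := by
          simp [List.get_eq_getElem, List.getElem_append_left (by omega : i < h.length)]
        have htake : (h ++ [(u, σ h u)]).take i = h.take i :=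
          List.take_append_of_le_length (by omega)
        rw [hget, htake] at hne
        exact hne
      · have hieq : i = n := by omega
        subst hieq
        have hget : (h ++ [(u, σ h u)]).get ⟨i, hi'⟩ = (u, σ h u) := by
          simp [List.get_eq_getElem, ← hlen, List.getElem_append_right (le_refl h.length)]
        have htake : (h ++ [(u, σ h u)]).take i = h := by
          rw [← hlen]
          exact List.take_left
        rw [hget, htake] at hne
        exact hne rfl

lemma rp_playV (σ : Profile V A) (v : V) (n : ℕ) :
    G.playV (G.rpProfile σ) v n = G.playV σ v n := by
  unfold playV; rw [(G.rp_histState σ v n).1]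

lemma rp_playA (σ : Profile V A) (v : V) (n : ℕ) :
    G.playA (G.rpProfile σ) v n = G.playA σ v n := by
  unfold playA playV
  rw [(G.rp_histState σ v n).1]
  exact G.rp_eq_of_comp (G.rp_histState σ v n).2 _

lemma rp_reward (p : P) (σ : Profile V A) (v : V) :
    G.reward p (G.rpProfile σ) v = G.reward p σ v := by
  unfold reward
  exact tsum_congr fun i => by rw [G.rp_playV, G.rp_playA]

lemma rp_ER (p : P) (σ : Profile V A) : G.ER p (G.rpProfile σ) = G.ER p σ := by
  unfold ER
  exact tsum_congr fun v => by rw [G.rp_reward]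

end RP
end MDSG
namespace MDSG
section Main
variable {P V A : Type} [Fintype V] [Fintype A] [Nonempty A] (G : MDSG P V A)

/-- The history `h` (with current vertex `u`) starts at `v`. -/
def FromV (v : V) : List (V × A) → V → Prop
  | [], u => u = v
  | x :: _, _ => x.1 = v

lemma histState_head (σ : Profile V A) (w : V) :
    ∀ n, (G.histState σ w n).1 = [] ∨ ∃ x rest, (G.histState σ w n).1 = (w, x) :: rest := by
  intro n
  induction n with
  | zero => exact Or.inl rfl
  | succ n ih =>
    right
    have hsh : (G.histState σ w (n+1)).1
        = (G.histState σ w n).1 ++ [((G.histState σ w n).2, σ (G.histState σ w n).1 (G.histState σ w n).2)] := rfl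
    rcases ih with hnil | ⟨x, rest, hcons⟩
    · have hn0 : n = 0 := by
        have := G.histState_length σ w n; rw [hnil] at this; simpa using this.symm
      subst hn0
      exact ⟨σ [] w, [], by rw [hsh, hnil]; rfl⟩
    · exact ⟨x, rest ++ [_], by rw [hsh, hcons]; rfl⟩

lemma fromV_play (σ : Profile V A) (v : V) (n : ℕ) :
    FromV v (G.histState σ v n).1 (G.histState σ v n).2 := by
  cases n with
  | zero => exact rfl
  | succ n =>
    rcases G.histState_head σ v (n+1) with hnil | ⟨x, rest, hcons⟩
    · have := G.histState_length σ v (n+1)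
      rw [hnil] at this
      simp at this
    · rw [hcons]
      exact rfl

lemma fromV_unique {v w : V} {h : List (V × A)} {u : V}
    (h1 : FromV v h u) (h2 : FromV w h u) : v = w := by
  cases h with
  | nil => exact h1.symm.trans h2
  | cons x t => exact h1.symm.trans h2

lemma ER_le_of_reward_le {p : P} {σ₁ σ₂ : Profile V A}
    (h : ∀ v, 0 < G.init v → G.reward p σ₁ v ≤ G.reward p σ₂ v) : G.ER p σ₁ ≤ G.ER p σ₂ := by
  unfold ER
  rw [tsum_fintype, tsum_fintype]
  refine Finset.sum_le_sum fun v _ => ?_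
  rcases (G.init_nonneg v).eq_or_lt with h0 | h0
  · rw [← h0]; simp
  · exact mul_le_mul_of_nonneg_left (h v h0) (G.init_nonneg v)

lemma reward_le_of_ER_le {p : P} {τ σ : Profile V A} {v : V} (hv : 0 < G.init v)
    (hER : G.ER p τ ≤ G.ER p σ) (hothers : ∀ w, w ≠ v → G.reward p τ w = G.reward p σ w) :
    G.reward p τ v ≤ G.reward p σ v := by
  classical
  unfold ER at hER
  rw [tsum_fintype, tsum_fintype] at hER
  have h1 : (∑ w ∈ Finset.univ.erase v, G.init w * G.reward p τ w) + G.init v * G.reward p τ v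
      = ∑ w : V, G.init w * G.reward p τ w := Finset.sum_erase_add _ _ (Finset.mem_univ v)
  have h2 : (∑ w ∈ Finset.univ.erase v, G.init w * G.reward p σ w) + G.init v * G.reward p σ v
      = ∑ w : V, G.init w * G.reward p σ w := Finset.sum_erase_add _ _ (Finset.mem_univ v)
  have h3 : ∑ w ∈ Finset.univ.erase v, G.init w * G.reward p τ w
      = ∑ w ∈ Finset.univ.erase v, G.init w * G.reward p σ w := by
    refine Finset.sum_congr rfl fun w hw => ?_
    rw [hothers w (Finset.ne_of_mem_erase hw)]
  have hmul : G.init v * G.reward p τ v ≤ G.init v * G.reward p σ v := by linarith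
  exact le_of_mul_le_mul_left hmul hv

lemma rp_main (p : P) (σ σ'' : Profile V A)
    (HN : ∀ τ, G.DiffOnly σ τ p → G.ER p τ ≤ G.ER p σ)
    (hdo : G.DiffOnly (G.rpProfile σ) σ'' p)
    (v : V) (hv : 0 < G.init v) :
    G.reward p σ'' v ≤ G.reward p σ v := by
  classical
  set σ' := G.rpProfile σ with hσ'def
  by_cases hagree : ∀ n, σ'' (G.histState σ'' v n).1 (G.histState σ'' v n).2
      = σ' (G.histState σ'' v n).1 (G.histState σ'' v n).2
  · -- σ'' follows σ' from v: plays and rewards coincide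
    have hhist : ∀ n, G.histState σ'' v n = G.histState σ' v n := by
      intro n
      induction n with
      | zero => rfl
      | succ n ih =>
        show ((G.histState σ'' v n).1 ++ [((G.histState σ'' v n).2, σ'' (G.histState σ'' v n).1 (G.histState σ'' v n).2)],
            G.tr (G.histState σ'' v n).2 (σ'' (G.histState σ'' v n).1 (G.histState σ'' v n).2)) = _
        rw [hagree n, ih]
        rfl
    have hrw : G.reward p σ'' v = G.reward p σ' v := by
      unfold reward
      refine tsum_congr fun i => ?_
      unfold playA playV
      rw [hagree i, hhist i]
    rw [hrw, hσ'def, G.rp_reward]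
  · push_neg at hagree
    set k := Nat.find hagree with hkdef
    have hkspec : σ'' (G.histState σ'' v k).1 (G.histState σ'' v k).2
        ≠ σ' (G.histState σ'' v k).1 (G.histState σ'' v k).2 := Nat.find_spec hagree
    have hkmin : ∀ n < k, σ'' (G.histState σ'' v n).1 (G.histState σ'' v n).2
        = σ' (G.histState σ'' v n).1 (G.histState σ'' v n).2 := by
      intro n hn
      have := Nat.find_min hagree hn
      simpa using this
    have hhist : ∀ n, n ≤ k → G.histState σ'' v n = G.histState σ v n := by
      intro n hn
      induction n with
      | zero => rfl
      | succ n ih =>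
        have hnk : n < k := hn
        have ihn := ih (Nat.le_of_lt hnk)
        show ((G.histState σ'' v n).1 ++ [((G.histState σ'' v n).2, σ'' (G.histState σ'' v n).1 (G.histState σ'' v n).2)],
            G.tr (G.histState σ'' v n).2 (σ'' (G.histState σ'' v n).1 (G.histState σ'' v n).2)) = _
        rw [hkmin n hnk, ihn, hσ'def, G.rp_eq_of_comp (G.rp_histState σ v n).2]
        rfl
    set hk := (G.histState σ v k).1 with hhk
    set uk := (G.histState σ v k).2 with huk
    have hklen : hk.length = k := G.histState_length σ v k
    have hcompk : ∀ i, ¬ G.DeviatesAt σ hk i := (G.rp_histState σ v k).2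
    have hσ'σ : σ' hk uk = σ hk uk := G.rp_eq_of_comp hcompk uk
    set a := σ'' hk uk with ha
    have hane : a ≠ σ hk uk := by
      rw [ha, ← hσ'σ]
      have h0 := hkspec
      rw [hhist k le_rfl] at h0
      exact h0
    have howner : G.owner uk = p := by
      by_contra hno
      exact hane (by rw [ha, hdo _ _ hno, hσ'σ])
    -- the comparison strategy τ: follow σ, but from (hk, uk) on, p plays bestA
    set τ : Profile V A := fun h u =>
      if G.owner u = p ∧ FromV v h u ∧ hk <+: h then G.bestA p u else σ h u with hτdef
    have hτdiff : G.DiffOnly σ τ p := by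
      intro h u hu
      simp only [hτdef]
      rw [if_neg (by tauto)]
    -- τ coincides with σ from any start w ≠ v
    have hτσw : ∀ w, w ≠ v → ∀ n, τ (G.histState σ w n).1 (G.histState σ w n).2
        = σ (G.histState σ w n).1 (G.histState σ w n).2 := by
      intro w hw n
      simp only [hτdef]
      rw [if_neg]
      rintro ⟨-, hfv, -⟩
      exact hw (fromV_unique (G.fromV_play σ w n) hfv)
    have hτw : ∀ w, w ≠ v → ∀ n, G.histState τ w n = G.histState σ w n := by
      intro w hw n
      induction n with
      | zero => rfl
      | succ n ih =>
        have hτσ := hτσw w hw n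
        show ((G.histState τ w n).1 ++ [((G.histState τ w n).2, τ (G.histState τ w n).1 (G.histState τ w n).2)],
            G.tr (G.histState τ w n).2 (τ (G.histState τ w n).1 (G.histState τ w n).2)) = _
        rw [ih, hτσ]
        rfl
    have hτwr : ∀ w, w ≠ v → G.reward p τ w = G.reward p σ w := by
      intro w hw
      unfold reward
      refine tsum_congr fun i => ?_
      unfold playA playV
      rw [hτw w hw i, hτσw w hw i]
    -- τ coincides with σ from v for the first k steps
    have hτσn : ∀ n, n < k → τ (G.histState σ v n).1 (G.histState σ v n).2
        = σ (G.histState σ v n).1 (G.histState σ v n).2 := by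
      intro n hn
      simp only [hτdef]
      rw [if_neg]
      rintro ⟨-, -, hpre⟩
      have := hpre.length_le
      rw [hklen, G.histState_length σ v n] at this
      omega
    have hτv : ∀ n, n ≤ k → G.histState τ v n = G.histState σ v n := by
      intro n hn
      induction n with
      | zero => rfl
      | succ n ih =>
        have hnk : n < k := hn
        have ihn := ih (Nat.le_of_lt hnk)
        show ((G.histState τ v n).1 ++ [((G.histState τ v n).2, τ (G.histState τ v n).1 (G.histState τ v n).2)],
            G.tr (G.histState τ v n).2 (τ (G.histState τ v n).1 (G.histState τ v n).2)) = _
        rw [ihn, hτσn n hnk]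
        rfl
    -- from (hk, uk) on, the play of τ has p playing bestA
    have hτk1 : (G.histState τ v k).1 = hk := by rw [hτv k le_rfl]
    have hτk2 : G.playV τ v k = uk := by unfold playV; rw [hτv k le_rfl]
    have hBC : G.BComp p (shiftP τ hk) uk := by
      intro n hown
      have hsh := G.histState_shift τ v k n
      rw [hτk1, hτk2] at hsh
      unfold playV at hown
      unfold playA playV
      show shiftP τ hk (G.histState (shiftP τ hk) uk n).1 (G.histState (shiftP τ hk) uk n).2 = _
      show τ (hk ++ (G.histState (shiftP τ hk) uk n).1) (G.histState (shiftP τ hk) uk n).2 = _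
      have hfv : FromV v (hk ++ (G.histState (shiftP τ hk) uk n).1) (G.histState (shiftP τ hk) uk n).2 := by
        have := G.fromV_play τ v (k + n)
        rw [hsh] at this
        exact this
      simp only [hτdef]
      rw [if_pos ⟨hown, hfv, List.prefix_append _ _⟩]
    have hY : G.val p uk ≤ G.reward p (shiftP τ hk) uk := G.val_le_reward p _ uk hBC
    -- σ'' from (hk, uk): plays a, then is punished
    have hPC : G.PComp p (shiftP σ'' (hk ++ [(uk, a)])) (G.tr uk a) := by
      intro n hown
      unfold playV at hown
      unfold playA playV
      set g := hk ++ [(uk, a)] with hgdef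
      set h' := (G.histState (shiftP σ'' g) (G.tr uk a) n).1 with hh'
      set u' := (G.histState (shiftP σ'' g) (G.tr uk a) n).2 with hu'
      show shiftP σ'' g h' u' = _
      show σ'' (g ++ h') u' = _
      have hgh : g ++ h' = hk ++ ((uk, a) :: h') := by
        rw [hgdef, List.append_assoc]
        rfl
      have hdev : G.DeviatesAt σ (g ++ h') k := by
        have hlen2 : k < (g ++ h').length := by
          rw [hgh]
          simp [hklen]
        refine ⟨hlen2, ?_⟩
        have hget : (g ++ h').get ⟨k, hlen2⟩ = (uk, a) := by
          simp only [hgh, List.get_eq_getElem]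
          rw [List.getElem_append_right (by omega : hk.length ≤ k)]
          simp [hklen]
        have htake : (g ++ h').take k = hk := by
          rw [hgh, ← hklen]
          exact List.take_left
        rw [hget, htake]
        exact hane
      have hmin2 : ∀ m, m < k → ¬ G.DeviatesAt σ (g ++ h') m := by
        rintro m hm ⟨hml, hne⟩
        refine hcompk m ⟨by omega, ?_⟩
        have hget : (g ++ h').get ⟨m, hml⟩ = hk.get ⟨m, by omega⟩ := by
          simp only [hgh, List.get_eq_getElem]
          rw [List.getElem_append_left (by omega : m < hk.length)]
        have htake : (g ++ h').take m = hk.take m := by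
          rw [hgh]
          exact List.take_append_of_le_length (by omega)
        rw [hget, htake] at hne
        exact hne
      have hd : ∃ i, G.DeviatesAt σ (g ++ h') i := ⟨k, hdev⟩
      have hσ'p : σ' (g ++ h') u' = G.punishA p u' := by
        rw [hσ'def]
        unfold rpProfile
        rw [dif_pos hd]
        have hfind : Nat.find hd = k := by
          refine le_antisymm (Nat.find_min' hd hdev) ?_
          by_contra hlt
          push_neg at hlt
          exact hmin2 _ hlt (Nat.find_spec hd)
        have hget2 : (g ++ h').get ⟨Nat.find hd, G.deviatesAt_lt (Nat.find_spec hd)⟩ = (uk, a) := by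
          have : ((⟨Nat.find hd, G.deviatesAt_lt (Nat.find_spec hd)⟩ : Fin (g ++ h').length))
              = ⟨k, G.deviatesAt_lt hdev⟩ := Fin.ext hfind
          rw [this]
          simp only [hgh, List.get_eq_getElem]
          rw [List.getElem_append_right (by omega : hk.length ≤ k)]
          simp [hklen]
        rw [hget2, howner]
      rw [hdo _ _ hown, hσ'p]
    -- reward decompositions at step k
    have hh''1 : (G.histState σ'' v k).1 = hk := by rw [hhist k le_rfl]
    have hh''2 : G.playV σ'' v k = uk := by unfold playV; rw [hhist k le_rfl]
    have hsplit'' := G.reward_split p σ'' v k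
    rw [hh''1, hh''2] at hsplit''
    have hsplitτ := G.reward_split p τ v k
    rw [hτk1, hτk2] at hsplitτ
    -- the two prefixes agree
    have hpre : ∀ i ∈ Finset.range k,
        G.rew p (G.playV σ'' v i) (G.playA σ'' v i) * G.disc ^ i
          = G.rew p (G.playV τ v i) (G.playA τ v i) * G.disc ^ i := by
      intro i hi
      rw [Finset.mem_range] at hi
      have hV'' : G.playV σ'' v i = G.playV σ v i := by unfold playV; rw [hhist i hi.le]
      have hA'' : G.playA σ'' v i = G.playA σ v i := by
        unfold playA playV
        rw [hkmin i hi, hhist i hi.le, hσ'def, G.rp_eq_of_comp (G.rp_histState σ v i).2]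
      have hVτ : G.playV τ v i = G.playV σ v i := by unfold playV; rw [hτv i hi.le]
      have hAτ : G.playA τ v i = G.playA σ v i := by
        unfold playA playV
        rw [hτv i hi.le, hτσn i hi]
      rw [hV'', hA'', hVτ, hAτ]
    -- the σ''-tail is at most the τ-tail
    have hX : G.reward p (shiftP σ'' hk) uk ≤ G.val p uk := by
      have hstep := G.reward_step p (shiftP σ'' hk) uk
      have hact : shiftP σ'' hk [] uk = a := by
        rw [shiftP, List.append_nil, ha]
      rw [hact] at hstep
      have hshsh : shiftP (shiftP σ'' hk) [(uk, a)] = shiftP σ'' (hk ++ [(uk, a)]) := by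
        funext h u
        simp [shiftP, List.append_assoc]
      rw [hshsh] at hstep
      have htail := G.reward_le_val p _ (G.tr uk a) hPC
      have hQ := G.Q_le_val p uk howner a
      rw [hstep]
      have := mul_le_mul_of_nonneg_left htail G.disc_pos.le
      simp only [Qv] at hQ
      linarith
    have hfin : G.reward p σ'' v ≤ G.reward p τ v := by
      rw [hsplit'', hsplitτ, Finset.sum_congr rfl hpre]
      have : G.reward p (shiftP σ'' hk) uk ≤ G.reward p (shiftP τ hk) uk := le_trans hX hY
      have hd0 : (0:ℝ) ≤ G.disc ^ k := pow_nonneg G.disc_pos.le k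
      nlinarith
    have hτσ_ER : G.ER p τ ≤ G.ER p σ := HN τ hτdiff
    exact le_trans hfin (G.reward_le_of_ER_le hv hτσ_ER hτwr)

end Main
end MDSG

open MDSG in
/-- Every Nash equilibrium (respectively, leader strategy profile) `σ` of an
MDSG can be replaced by a Nash equilibrium (respectively, leader strategy
profile) `σ'` with the same outcome plays, and hence the same expected rewards
for all players, that is a reward-and-punish strategy profile: on every
history that deviates from the prescribed actions, each player's action
depends only on the current vertex and on the identity of the first player
who deviated. -/
theorem reward_and_punish_suffices {P V A : Type} (G : MDSG P V A) :
    (∀ σ : Profile V A, G.IsNash σ →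
      ∃ σ' : Profile V A, G.IsNash σ' ∧ G.IsRewardPunish σ' ∧
        (∀ w : V, 0 < G.init w →
          ∀ n : ℕ, G.playV σ' w n = G.playV σ w n ∧ G.playA σ' w n = G.playA σ w n) ∧
        (∀ p : P, G.ER p σ' = G.ER p σ)) ∧
    (∀ (l : P) (σ : Profile V A), G.IsLeaderSP l σ →
      ∃ σ' : Profile V A, G.IsLeaderSP l σ' ∧ G.IsRewardPunish σ' ∧
        (∀ w : V, 0 < G.init w →
          ∀ n : ℕ, G.playV σ' w n = G.playV σ w n ∧ G.playA σ' w n = G.playA σ w n) ∧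
        (∀ p : P, G.ER p σ' = G.ER p σ)) := by

  haveI := G.fin_V; haveI := G.fin_A; haveI := G.fin_P
  letI : Fintype V := Fintype.ofFinite V
  letI : Fintype A := Fintype.ofFinite A
  haveI : Nonempty A := G.nonempty_A
  constructor
  · intro σ hσ
    refine ⟨G.rpProfile σ, ?_, G.rp_isRP σ,
      fun w _ n => ⟨G.rp_playV σ w n, G.rp_playA σ w n⟩, fun q => G.rp_ER q σ⟩
    intro q σ'' hdo
    rw [G.rp_ER q σ]
    exact G.ER_le_of_reward_le fun w hw => G.rp_main q σ σ'' (fun τ hτ => hσ q τ hτ) hdo w hw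
  · intro l σ hσ
    refine ⟨G.rpProfile σ, ?_, G.rp_isRP σ,
      fun w _ n => ⟨G.rp_playV σ w n, G.rp_playA σ w n⟩, fun q => G.rp_ER q σ⟩
    intro q hql σ'' hdo
    rw [G.rp_ER q σ]
    exact G.ER_le_of_reward_le fun w hw => G.rp_main q σ σ'' (fun τ hτ => hσ q hql τ hτ) hdo w hw
end

section
/- For every MDSG with designated leader l and every memory bound b ≥ 1: if the set of Nash equilibria (respectively, leader strategy profiles) that are reward-and-punish profiles whose outcome plays are generated with compliance memory bound b is nonempty, then it contains an element maximizing the leader's expected reward E_l over that set; i.e., an optimal such Nash equilibrium (respectively, leader strategy profile) exists. -/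
open scoped BigOperators

namespace MDSGAux
open MDSG
variable {P V A : Type}

lemma histState_length (G : MDSG P V A) (σ : Profile V A) (v : V) :
    ∀ k, (G.histState σ v k).1.length = k := by
  intro k
  induction k with
  | zero => rfl
  | succ k ih => simp [MDSG.histState, ih]

lemma hist_compliant (G : MDSG P V A) (σ : Profile V A) (v : V) :
    ∀ k i, ¬ G.DeviatesAt σ ((G.histState σ v k).1) i := by
  intro k
  induction k with
  | zero =>
    intro i ⟨hi, _⟩
    simp [MDSG.histState] at hi
  | succ k ih =>
    intro i hdev
    have hform : (G.histState σ v (k+1)).1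
        = (G.histState σ v k).1 ++ [((G.histState σ v k).2,
            σ (G.histState σ v k).1 (G.histState σ v k).2)] := rfl
    rw [hform] at hdev
    set h := (G.histState σ v k).1 with hh
    set s2 := (G.histState σ v k).2 with hs2
    set a2 := σ h s2 with ha2
    obtain ⟨hi, hne⟩ := hdev
    have hlen : h.length = k := histState_length G σ v k
    have hi' : i < k + 1 := by simpa [hlen] using hi
    rcases Nat.lt_succ_iff_lt_or_eq.mp hi' with hik | hik
    · apply ih i
      refine ⟨by omega, ?_⟩
      have hget : (h ++ [(s2, a2)]).get ⟨i, hi⟩ = h.get ⟨i, by omega⟩ := by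
        simp only [List.get_eq_getElem]; exact List.getElem_append_left (by omega)
      have htake : (h ++ [(s2, a2)]).take i = h.take i :=
        List.take_append_of_le_length (by omega)
      rw [hget, htake] at hne
      exact hne
    · subst hik
      clear_value a2 s2 h
      have hil : i = h.length := hlen.symm
      subst hil
      have hget : (h ++ [(s2, a2)]).get ⟨h.length, hi⟩ = (s2, a2) := by simp
      have htake : (h ++ [(s2, a2)]).take h.length = h := by
        rw [List.take_append_of_le_length le_rfl, List.take_length]
      rw [hget, htake] at hne
      exact hne ha2

lemma histState_eq_machine (G : MDSG P V A) (σ : Profile V A) {n : ℕ}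
    (m₀ : Fin n) (μ : Fin n → V × A → Fin n) (u : Fin n → V → A)
    (H : ∀ h : List (V × A), (∀ i, ¬ G.DeviatesAt σ h i) →
      ∀ v, σ h v = u (h.foldl μ m₀) v) (v : V) :
    ∀ k, G.histState σ v k = G.histState (fun h w => u (h.foldl μ m₀) w) v k := by
  intro k
  induction k with
  | zero => rfl
  | succ k ih =>
    have hσ : σ (G.histState σ v k).1 (G.histState σ v k).2
        = u ((G.histState σ v k).1.foldl μ m₀) (G.histState σ v k).2 :=
      H _ (fun i => hist_compliant G σ v k i) _
    show ((G.histState σ v k).1 ++ [((G.histState σ v k).2,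
        σ (G.histState σ v k).1 (G.histState σ v k).2)],
        G.tr (G.histState σ v k).2 (σ (G.histState σ v k).1 (G.histState σ v k).2)) = _
    rw [hσ, ih]
    rfl

lemma playA_eq_machine (G : MDSG P V A) (σ : Profile V A) {n : ℕ}
    (m₀ : Fin n) (μ : Fin n → V × A → Fin n) (u : Fin n → V → A)
    (H : ∀ h : List (V × A), (∀ i, ¬ G.DeviatesAt σ h i) →
      ∀ v, σ h v = u (h.foldl μ m₀) v) (v : V) (i : ℕ) :
    G.playA σ v i = G.playA (fun h w => u (h.foldl μ m₀) w) v i := by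
  unfold MDSG.playA MDSG.playV
  rw [H _ (fun j => hist_compliant G σ v i j), histState_eq_machine G σ m₀ μ u H v i]

lemma ER_eq_machine (G : MDSG P V A) (l : P) (σ : Profile V A) {n : ℕ}
    (m₀ : Fin n) (μ : Fin n → V × A → Fin n) (u : Fin n → V → A)
    (H : ∀ h : List (V × A), (∀ i, ¬ G.DeviatesAt σ h i) →
      ∀ v, σ h v = u (h.foldl μ m₀) v) :
    G.ER l σ = G.ER l (fun h w => u (h.foldl μ m₀) w) := by
  unfold MDSG.ER
  refine tsum_congr fun v => ?_
  congr 1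
  unfold MDSG.reward
  refine tsum_congr fun i => ?_
  rw [playA_eq_machine G σ m₀ μ u H v i]
  unfold MDSG.playV
  rw [histState_eq_machine G σ m₀ μ u H v i]

open Classical in
lemma exists_optimal (G : MDSG P V A) (l : P) (b : ℕ)
    (Q : Profile V A → Prop)
    (hne : ∃ σ, Q σ ∧ G.ComplianceMemBound σ b) :
    ∃ σ, (Q σ ∧ G.ComplianceMemBound σ b) ∧
      ∀ σ', Q σ' ∧ G.ComplianceMemBound σ' b → G.ER l σ' ≤ G.ER l σ := by
  haveI := G.fin_V
  haveI := G.fin_A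
  set D := Σ n : Fin (b+1), Fin n.val × (Fin n.val → V × A → Fin n.val) × (Fin n.val → V → A)
    with hD
  haveI : Finite D := by
    rw [hD]; infer_instance
  set F : D → ℝ := fun d => G.ER l (fun h w => d.2.2.2 (h.foldl d.2.2.1 d.2.1) w) with hF
  have key : ∀ σ, G.ComplianceMemBound σ b → ∃ d : D, G.ER l σ = F d := by
    rintro σ ⟨n, hn, m₀, μ, u, H⟩
    exact ⟨⟨⟨n, by omega⟩, m₀, μ, u⟩, ER_eq_machine G l σ m₀ μ u H⟩
  set S : Set ℝ := {x | ∃ σ, (Q σ ∧ G.ComplianceMemBound σ b) ∧ G.ER l σ = x} with hS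
  have hSsub : S ⊆ Set.range F := by
    rintro x ⟨σ, ⟨_, hc⟩, rfl⟩
    obtain ⟨d, hd⟩ := key σ hc
    exact ⟨d, hd.symm⟩
  have hSfin : S.Finite := (Set.finite_range F).subset hSsub
  obtain ⟨σ0, h0⟩ := hne
  have hSne : S.Nonempty := ⟨G.ER l σ0, σ0, h0, rfl⟩
  obtain ⟨x, hxS, hmax⟩ := Set.exists_max_image S id hSfin hSne
  obtain ⟨σm, hσm, hxm⟩ := hxS
  refine ⟨σm, hσm, fun σ' h' => ?_⟩
  have := hmax (G.ER l σ') ⟨σ', h', rfl⟩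
  simpa [hxm] using this

end MDSGAux

open MDSG MDSGAux in
/-- For every MDSG with designated leader `l` and every memory bound `b ≥ 1`:
if the set of Nash equilibria (respectively, leader strategy profiles) that
are reward-and-punish profiles whose outcome plays are generated with
compliance memory bound `b` is nonempty, then it contains an element
maximizing the leader's expected reward over that set. -/
theorem optimal_bounded_memory_profiles_exist {P V A : Type} (G : MDSG P V A)
    (l : P) (b : ℕ) (hb : 1 ≤ b) :
    ((∃ σ : Profile V A,
        G.IsNash σ ∧ G.IsRewardPunish σ ∧ G.ComplianceMemBound σ b) →
      ∃ σ : Profile V A,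
        (G.IsNash σ ∧ G.IsRewardPunish σ ∧ G.ComplianceMemBound σ b) ∧
        ∀ σ' : Profile V A,
          G.IsNash σ' ∧ G.IsRewardPunish σ' ∧ G.ComplianceMemBound σ' b →
          G.ER l σ' ≤ G.ER l σ) ∧
    ((∃ σ : Profile V A,
        G.IsLeaderSP l σ ∧ G.IsRewardPunish σ ∧ G.ComplianceMemBound σ b) →
      ∃ σ : Profile V A,
        (G.IsLeaderSP l σ ∧ G.IsRewardPunish σ ∧ G.ComplianceMemBound σ b) ∧
        ∀ σ' : Profile V A,
          G.IsLeaderSP l σ' ∧ G.IsRewardPunish σ' ∧ G.ComplianceMemBound σ' b →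
          G.ER l σ' ≤ G.ER l σ) := by
  constructor
  · intro h
    obtain ⟨σ0, h0⟩ := h
    obtain ⟨σ, ⟨hQ, hC⟩, hmax⟩ := exists_optimal G l b
      (fun σ => G.IsNash σ ∧ G.IsRewardPunish σ) ⟨σ0, ⟨h0.1, h0.2.1⟩, h0.2.2⟩
    exact ⟨σ, ⟨hQ.1, hQ.2, hC⟩, fun σ' h' => hmax σ' ⟨⟨h'.1, h'.2.1⟩, h'.2.2⟩⟩
  · intro h
    obtain ⟨σ0, h0⟩ := h
    obtain ⟨σ, ⟨hQ, hC⟩, hmax⟩ := exists_optimal G l b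
      (fun σ => G.IsLeaderSP l σ ∧ G.IsRewardPunish σ) ⟨σ0, ⟨h0.1, h0.2.1⟩, h0.2.2⟩
    exact ⟨σ, ⟨hQ.1, hQ.2, hC⟩, fun σ' h' => hmax σ' ⟨⟨h'.1, h'.2.1⟩, h'.2.2⟩⟩
end

section
/- In the game G₁, no memoryless (positional) pure strategy profile is a Nash equilibrium; that is, G₁ has no memoryless pure Nash equilibrium. -/
open scoped BigOperators

namespace MDSG

/-- The game `G₁` (Figure 1 of the paper): three players `0, 1, 2`
(representing players 1, 2, 3); six vertices, where `0, 1, 2` represent the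
vertices 1, 2, 3 and `3, 4, 5` represent the sinks `s₁, s₂, s₃`; vertex `i`
and sink `3 + i` are owned by player `i`; actions `Bool`.  Vertex `0`: `true`
moves to vertex `1` with rewards `(0,0,0)`, `false` moves to the sink `3` with
rewards `(2,1,9)`.  Vertex `1`: `true` moves to vertex `2` with rewards
`(0,0,0)`, `false` moves to the sink `4` with rewards `(9,2,1)`.  Vertex `2`:
`true` moves to vertex `0` with rewards `(0,0,0)`, `false` moves to the sink
`5` with rewards `(1,9,2)`.  The sinks loop with rewards `(0,0,0)`.  The
initial distribution assigns probability `1/3` to each of the vertices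
`0, 1, 2`, and the discount factor is `1/2`. -/
noncomputable def G1 : MDSG (Fin 3) (Fin 6) Bool where
  fin_P := inferInstance
  fin_V := inferInstance
  fin_A := inferInstance
  nonempty_A := inferInstance
  owner := ![0, 1, 2, 0, 1, 2]
  tr := fun v a =>
    if v = 0 then (if a then 1 else 3)
    else if v = 1 then (if a then 2 else 4)
    else if v = 2 then (if a then 0 else 5)
    else v
  rew := fun p v a =>
    if a then 0
    else if v = 0 then ![2, 1, 9] p
    else if v = 1 then ![9, 2, 1] p
    else if v = 2 then ![1, 9, 2] p
    else 0
  init := fun v => if v.val < 3 then 1 / 3 else 0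
  init_nonneg := by intro v; (try dsimp only); split <;> norm_num
  init_sum := by
    rw [tsum_fintype, Fin.sum_univ_six]
    norm_num [show ((0 : Fin 6) : ℕ) = 0 from rfl, show ((1 : Fin 6) : ℕ) = 1 from rfl,
      show ((2 : Fin 6) : ℕ) = 2 from rfl, show ((3 : Fin 6) : ℕ) = 3 from rfl,
      show ((4 : Fin 6) : ℕ) = 4 from rfl, show ((5 : Fin 6) : ℕ) = 5 from rfl]
  disc := 1 / 2
  disc_pos := by norm_num
  disc_lt_one := by norm_num

end MDSG


namespace MDSG
variable {P V A : Type}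

lemma histState_snd_succ (G : MDSG P V A) (σ : Profile V A) (hσ : G.Positional σ) (v : V) :
    ∀ n, (G.histState σ v (n+1)).2 = (G.histState σ (G.tr v (σ [] v)) n).2 := by
  intro n
  induction n with
  | zero =>
    show (G.tr v (σ [] v)) = _
    rfl
  | succ n ih =>
    show G.tr (G.histState σ v (n+1)).2 (σ (G.histState σ v (n+1)).1 (G.histState σ v (n+1)).2)
        = G.tr (G.histState σ (G.tr v (σ [] v)) n).2
            (σ (G.histState σ (G.tr v (σ [] v)) n).1 (G.histState σ (G.tr v (σ [] v)) n).2)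
    rw [hσ _ [] , hσ (G.histState σ (G.tr v (σ [] v)) n).1 [], ih]

lemma playV_succ (G : MDSG P V A) (σ : Profile V A) (hσ : G.Positional σ) (v : V) (n : ℕ) :
    G.playV σ v (n+1) = G.playV σ (G.tr v (σ [] v)) n :=
  histState_snd_succ G σ hσ v n

lemma playA_eq (G : MDSG P V A) (σ : Profile V A) (hσ : G.Positional σ) (v : V) (n : ℕ) :
    G.playA σ v n = σ [] (G.playV σ v n) := hσ _ [] _

lemma playA_succ (G : MDSG P V A) (σ : Profile V A) (hσ : G.Positional σ) (v : V) (n : ℕ) :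
    G.playA σ v (n+1) = G.playA σ (G.tr v (σ [] v)) n := by
  rw [playA_eq G σ hσ, playA_eq G σ hσ, playV_succ G σ hσ]

end MDSG

namespace MDSG

lemma G1_rew_bound (p : Fin 3) (w : Fin 6) (a : Bool) : |G1.rew p w a| ≤ 9 := by
  fin_cases p <;> fin_cases w <;> cases a <;> simp [G1] <;> norm_num

lemma G1_disc : G1.disc = 1/2 := rfl

lemma G1_summable (σ : Profile (Fin 6) Bool) (p : Fin 3) (v : Fin 6) :
    Summable (fun i : ℕ => G1.rew p (G1.playV σ v i) (G1.playA σ v i) * G1.disc ^ i) := by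
  apply Summable.of_norm_bounded
    (((summable_geometric_of_lt_one (by norm_num) (by norm_num)).mul_left 9 : Summable (fun i : ℕ => 9 * (1/2 : ℝ)^i)))
  intro i
  rw [norm_mul, G1_disc]
  have h1 : ‖((1:ℝ)/2) ^ i‖ = (1/2 : ℝ)^i := by
    rw [norm_pow, Real.norm_eq_abs, abs_of_nonneg]; norm_num
  rw [h1]
  exact mul_le_mul_of_nonneg_right (G1_rew_bound p _ _) (by positivity)

lemma G1_reward_rec (σ : Profile (Fin 6) Bool) (hσ : G1.Positional σ) (p : Fin 3) (v : Fin 6) :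
    G1.reward p σ v = G1.rew p v (σ [] v) + (1/2) * G1.reward p σ (G1.tr v (σ [] v)) := by
  unfold reward
  rw [Summable.tsum_eq_zero_add (G1_summable σ p v)]
  have h0 : G1.rew p (G1.playV σ v 0) (G1.playA σ v 0) * G1.disc ^ 0
      = G1.rew p v (σ [] v) := by
    have : G1.playV σ v 0 = v := rfl
    have h2 : G1.playA σ v 0 = σ [] v := rfl
    rw [this, h2]; simp
  rw [h0]
  congr 1
  rw [← tsum_mul_left]
  congr 1; funext i
  rw [playV_succ G1 σ hσ, playA_succ G1 σ hσ, G1_disc]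
  ring

lemma G1_reward_sink (σ : Profile (Fin 6) Bool) (hσ : G1.Positional σ) (p : Fin 3) (v : Fin 6)
    (hv : v = 3 ∨ v = 4 ∨ v = 5) : G1.reward p σ v = 0 := by
  have h := G1_reward_rec σ hσ p v
  rcases hv with rfl | rfl | rfl <;>
  [ (rw [show G1.tr 3 (σ [] 3) = 3 by cases hb : σ [] 3 <;> rfl,
        show G1.rew p 3 (σ [] 3) = 0 by cases hb : σ [] 3 <;> rfl] at h);
    (rw [show G1.tr 4 (σ [] 4) = 4 by cases hb : σ [] 4 <;> rfl,
        show G1.rew p 4 (σ [] 4) = 0 by cases hb : σ [] 4 <;> rfl] at h);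
    (rw [show G1.tr 5 (σ [] 5) = 5 by cases hb : σ [] 5 <;> rfl,
        show G1.rew p 5 (σ [] 5) = 0 by cases hb : σ [] 5 <;> rfl] at h)] <;>
  linarith

end MDSG

namespace MDSG

lemma G1_reward_true (σ : Profile (Fin 6) Bool) (hσ : G1.Positional σ) (p : Fin 3) (v : Fin 6)
    (hb : σ [] v = true) :
    G1.reward p σ v = 1/2 * G1.reward p σ (G1.tr v true) := by
  have h := G1_reward_rec σ hσ p v
  rw [hb] at h
  rw [h, show G1.rew p v true = 0 from rfl]
  ring

lemma G1_reward_false (σ : Profile (Fin 6) Bool) (hσ : G1.Positional σ) (p : Fin 3) (v : Fin 6)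
    (hv : v = 0 ∨ v = 1 ∨ v = 2) (hb : σ [] v = false) :
    G1.reward p σ v = G1.rew p v false := by
  have h := G1_reward_rec σ hσ p v
  rw [hb] at h
  rcases hv with rfl | rfl | rfl
  · rw [show G1.tr 0 false = 3 from rfl] at h
    rw [h, G1_reward_sink σ hσ p 3 (Or.inl rfl)]; ring
  · rw [show G1.tr 1 false = 4 from rfl] at h
    rw [h, G1_reward_sink σ hσ p 4 (Or.inr (Or.inl rfl))]; ring
  · rw [show G1.tr 2 false = 5 from rfl] at h
    rw [h, G1_reward_sink σ hσ p 5 (Or.inr (Or.inr rfl))]; ring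

lemma G1_ER_eq (σ : Profile (Fin 6) Bool) (p : Fin 3) :
    G1.ER p σ = 1/3 * G1.reward p σ 0 + 1/3 * G1.reward p σ 1 + 1/3 * G1.reward p σ 2 := by
  unfold ER
  rw [tsum_fintype, Fin.sum_univ_six]
  rw [show G1.init 0 = 1/3 from rfl, show G1.init 1 = 1/3 from rfl,
     show G1.init 2 = 1/3 from rfl, show G1.init 3 = 0 from rfl,
     show G1.init 4 = 0 from rfl, show G1.init 5 = 0 from rfl]
  ring

end MDSG

namespace MDSG

lemma G1_dev (σ : Profile (Fin 6) Bool) (hσ : G1.Positional σ) (d : Fin 6) (a : Bool) :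
    G1.Positional (fun h v => if v = d then a else σ h v)
    ∧ G1.DiffOnly σ (fun h v => if v = d then a else σ h v) (G1.owner d) := by
  constructor
  · intro h h' v
    by_cases hv : v = d <;> simp [hv, hσ h h' v]
  · intro h v hv
    by_cases h0 : v = d
    · subst h0; exact absurd rfl hv
    · simp [h0]

end MDSG

open MDSG in
/-- The game `G₁` has no memoryless (positional) pure Nash equilibrium. -/
theorem no_memoryless_Nash_in_G1 :
    ∀ σ : Profile (Fin 6) Bool, G1.Positional σ → ¬ G1.IsNash σ := by
  intro σ hσ hnash
  cases hb0 : σ [] 0 <;> cases hb1 : σ [] 1 <;> cases hb2 : σ [] 2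
  · -- case (false,false,false), player 0 deviates to true
    obtain ⟨hσ', hdiff⟩ := G1_dev σ hσ 0 true
    set σ' : Profile (Fin 6) Bool := fun h v => if v = 0 then true else σ h v with hdef
    have hc0 : σ' [] 0 = true := by
      rw [hdef]; show (if (0:Fin 6) = 0 then true else σ [] 0) = true; rw [if_pos rfl]
    have hc1 : σ' [] 1 = false := by
      rw [hdef]; show (if (1:Fin 6) = 0 then true else σ [] 1) = false
      rw [if_neg (by decide)]; exact hb1
    have hc2 : σ' [] 2 = false := by
      rw [hdef]; show (if (2:Fin 6) = 0 then true else σ [] 2) = false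
      rw [if_neg (by decide)]; exact hb2
    have hle := hnash 0 σ' hdiff
    have e0 := G1_reward_false σ hσ 0 0 (Or.inl rfl) hb0
    rw [show G1.rew 0 0 false = (2:ℝ) from rfl] at e0
    have e1 := G1_reward_false σ hσ 0 1 (Or.inr (Or.inl rfl)) hb1
    rw [show G1.rew 0 1 false = (9:ℝ) from rfl] at e1
    have e2 := G1_reward_false σ hσ 0 2 (Or.inr (Or.inr rfl)) hb2
    rw [show G1.rew 0 2 false = (1:ℝ) from rfl] at e2
    have e'0 := G1_reward_true σ' hσ' 0 0 hc0
    rw [show G1.tr 0 true = 1 from rfl] at e'0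
    have e'1 := G1_reward_false σ' hσ' 0 1 (Or.inr (Or.inl rfl)) hc1
    rw [show G1.rew 0 1 false = (9:ℝ) from rfl] at e'1
    have e'2 := G1_reward_false σ' hσ' 0 2 (Or.inr (Or.inr rfl)) hc2
    rw [show G1.rew 0 2 false = (1:ℝ) from rfl] at e'2
    have E := G1_ER_eq σ 0
    have E' := G1_ER_eq σ' 0
    linarith
  · -- case (false,false,true), player 0 deviates to true
    obtain ⟨hσ', hdiff⟩ := G1_dev σ hσ 0 true
    set σ' : Profile (Fin 6) Bool := fun h v => if v = 0 then true else σ h v with hdef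
    have hc0 : σ' [] 0 = true := by
      rw [hdef]; show (if (0:Fin 6) = 0 then true else σ [] 0) = true; rw [if_pos rfl]
    have hc1 : σ' [] 1 = false := by
      rw [hdef]; show (if (1:Fin 6) = 0 then true else σ [] 1) = false
      rw [if_neg (by decide)]; exact hb1
    have hc2 : σ' [] 2 = true := by
      rw [hdef]; show (if (2:Fin 6) = 0 then true else σ [] 2) = true
      rw [if_neg (by decide)]; exact hb2
    have hle := hnash 0 σ' hdiff
    have e0 := G1_reward_false σ hσ 0 0 (Or.inl rfl) hb0
    rw [show G1.rew 0 0 false = (2:ℝ) from rfl] at e0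
    have e1 := G1_reward_false σ hσ 0 1 (Or.inr (Or.inl rfl)) hb1
    rw [show G1.rew 0 1 false = (9:ℝ) from rfl] at e1
    have e2 := G1_reward_true σ hσ 0 2 hb2
    rw [show G1.tr 2 true = 0 from rfl] at e2
    have e'0 := G1_reward_true σ' hσ' 0 0 hc0
    rw [show G1.tr 0 true = 1 from rfl] at e'0
    have e'1 := G1_reward_false σ' hσ' 0 1 (Or.inr (Or.inl rfl)) hc1
    rw [show G1.rew 0 1 false = (9:ℝ) from rfl] at e'1
    have e'2 := G1_reward_true σ' hσ' 0 2 hc2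
    rw [show G1.tr 2 true = 0 from rfl] at e'2
    have E := G1_ER_eq σ 0
    have E' := G1_ER_eq σ' 0
    linarith
  · -- case (false,true,false), player 2 deviates to true
    obtain ⟨hσ', hdiff⟩ := G1_dev σ hσ 2 true
    set σ' : Profile (Fin 6) Bool := fun h v => if v = 2 then true else σ h v with hdef
    have hc0 : σ' [] 0 = false := by
      rw [hdef]; show (if (0:Fin 6) = 2 then true else σ [] 0) = false
      rw [if_neg (by decide)]; exact hb0
    have hc1 : σ' [] 1 = true := by
      rw [hdef]; show (if (1:Fin 6) = 2 then true else σ [] 1) = true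
      rw [if_neg (by decide)]; exact hb1
    have hc2 : σ' [] 2 = true := by
      rw [hdef]; show (if (2:Fin 6) = 2 then true else σ [] 2) = true; rw [if_pos rfl]
    have hle := hnash 2 σ' hdiff
    have e0 := G1_reward_false σ hσ 2 0 (Or.inl rfl) hb0
    rw [show G1.rew 2 0 false = (9:ℝ) from rfl] at e0
    have e1 := G1_reward_true σ hσ 2 1 hb1
    rw [show G1.tr 1 true = 2 from rfl] at e1
    have e2 := G1_reward_false σ hσ 2 2 (Or.inr (Or.inr rfl)) hb2
    rw [show G1.rew 2 2 false = (2:ℝ) from rfl] at e2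
    have e'0 := G1_reward_false σ' hσ' 2 0 (Or.inl rfl) hc0
    rw [show G1.rew 2 0 false = (9:ℝ) from rfl] at e'0
    have e'1 := G1_reward_true σ' hσ' 2 1 hc1
    rw [show G1.tr 1 true = 2 from rfl] at e'1
    have e'2 := G1_reward_true σ' hσ' 2 2 hc2
    rw [show G1.tr 2 true = 0 from rfl] at e'2
    have E := G1_ER_eq σ 2
    have E' := G1_ER_eq σ' 2
    linarith
  · -- case (false,true,true), player 1 deviates to false
    obtain ⟨hσ', hdiff⟩ := G1_dev σ hσ 1 false
    set σ' : Profile (Fin 6) Bool := fun h v => if v = 1 then false else σ h v with hdef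
    have hc0 : σ' [] 0 = false := by
      rw [hdef]; show (if (0:Fin 6) = 1 then false else σ [] 0) = false
      rw [if_neg (by decide)]; exact hb0
    have hc1 : σ' [] 1 = false := by
      rw [hdef]; show (if (1:Fin 6) = 1 then false else σ [] 1) = false; rw [if_pos rfl]
    have hc2 : σ' [] 2 = true := by
      rw [hdef]; show (if (2:Fin 6) = 1 then false else σ [] 2) = true
      rw [if_neg (by decide)]; exact hb2
    have hle := hnash 1 σ' hdiff
    have e0 := G1_reward_false σ hσ 1 0 (Or.inl rfl) hb0
    rw [show G1.rew 1 0 false = (1:ℝ) from rfl] at e0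
    have e1 := G1_reward_true σ hσ 1 1 hb1
    rw [show G1.tr 1 true = 2 from rfl] at e1
    have e2 := G1_reward_true σ hσ 1 2 hb2
    rw [show G1.tr 2 true = 0 from rfl] at e2
    have e'0 := G1_reward_false σ' hσ' 1 0 (Or.inl rfl) hc0
    rw [show G1.rew 1 0 false = (1:ℝ) from rfl] at e'0
    have e'1 := G1_reward_false σ' hσ' 1 1 (Or.inr (Or.inl rfl)) hc1
    rw [show G1.rew 1 1 false = (2:ℝ) from rfl] at e'1
    have e'2 := G1_reward_true σ' hσ' 1 2 hc2
    rw [show G1.tr 2 true = 0 from rfl] at e'2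
    have E := G1_ER_eq σ 1
    have E' := G1_ER_eq σ' 1
    linarith
  · -- case (true,false,false), player 1 deviates to true
    obtain ⟨hσ', hdiff⟩ := G1_dev σ hσ 1 true
    set σ' : Profile (Fin 6) Bool := fun h v => if v = 1 then true else σ h v with hdef
    have hc0 : σ' [] 0 = true := by
      rw [hdef]; show (if (0:Fin 6) = 1 then true else σ [] 0) = true
      rw [if_neg (by decide)]; exact hb0
    have hc1 : σ' [] 1 = true := by
      rw [hdef]; show (if (1:Fin 6) = 1 then true else σ [] 1) = true; rw [if_pos rfl]
    have hc2 : σ' [] 2 = false := by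
      rw [hdef]; show (if (2:Fin 6) = 1 then true else σ [] 2) = false
      rw [if_neg (by decide)]; exact hb2
    have hle := hnash 1 σ' hdiff
    have e0 := G1_reward_true σ hσ 1 0 hb0
    rw [show G1.tr 0 true = 1 from rfl] at e0
    have e1 := G1_reward_false σ hσ 1 1 (Or.inr (Or.inl rfl)) hb1
    rw [show G1.rew 1 1 false = (2:ℝ) from rfl] at e1
    have e2 := G1_reward_false σ hσ 1 2 (Or.inr (Or.inr rfl)) hb2
    rw [show G1.rew 1 2 false = (9:ℝ) from rfl] at e2
    have e'0 := G1_reward_true σ' hσ' 1 0 hc0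
    rw [show G1.tr 0 true = 1 from rfl] at e'0
    have e'1 := G1_reward_true σ' hσ' 1 1 hc1
    rw [show G1.tr 1 true = 2 from rfl] at e'1
    have e'2 := G1_reward_false σ' hσ' 1 2 (Or.inr (Or.inr rfl)) hc2
    rw [show G1.rew 1 2 false = (9:ℝ) from rfl] at e'2
    have E := G1_ER_eq σ 1
    have E' := G1_ER_eq σ' 1
    linarith
  · -- case (true,false,true), player 2 deviates to false
    obtain ⟨hσ', hdiff⟩ := G1_dev σ hσ 2 false
    set σ' : Profile (Fin 6) Bool := fun h v => if v = 2 then false else σ h v with hdef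
    have hc0 : σ' [] 0 = true := by
      rw [hdef]; show (if (0:Fin 6) = 2 then false else σ [] 0) = true
      rw [if_neg (by decide)]; exact hb0
    have hc1 : σ' [] 1 = false := by
      rw [hdef]; show (if (1:Fin 6) = 2 then false else σ [] 1) = false
      rw [if_neg (by decide)]; exact hb1
    have hc2 : σ' [] 2 = false := by
      rw [hdef]; show (if (2:Fin 6) = 2 then false else σ [] 2) = false; rw [if_pos rfl]
    have hle := hnash 2 σ' hdiff
    have e0 := G1_reward_true σ hσ 2 0 hb0
    rw [show G1.tr 0 true = 1 from rfl] at e0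
    have e1 := G1_reward_false σ hσ 2 1 (Or.inr (Or.inl rfl)) hb1
    rw [show G1.rew 2 1 false = (1:ℝ) from rfl] at e1
    have e2 := G1_reward_true σ hσ 2 2 hb2
    rw [show G1.tr 2 true = 0 from rfl] at e2
    have e'0 := G1_reward_true σ' hσ' 2 0 hc0
    rw [show G1.tr 0 true = 1 from rfl] at e'0
    have e'1 := G1_reward_false σ' hσ' 2 1 (Or.inr (Or.inl rfl)) hc1
    rw [show G1.rew 2 1 false = (1:ℝ) from rfl] at e'1
    have e'2 := G1_reward_false σ' hσ' 2 2 (Or.inr (Or.inr rfl)) hc2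
    rw [show G1.rew 2 2 false = (2:ℝ) from rfl] at e'2
    have E := G1_ER_eq σ 2
    have E' := G1_ER_eq σ' 2
    linarith
  · -- case (true,true,false), player 0 deviates to false
    obtain ⟨hσ', hdiff⟩ := G1_dev σ hσ 0 false
    set σ' : Profile (Fin 6) Bool := fun h v => if v = 0 then false else σ h v with hdef
    have hc0 : σ' [] 0 = false := by
      rw [hdef]; show (if (0:Fin 6) = 0 then false else σ [] 0) = false; rw [if_pos rfl]
    have hc1 : σ' [] 1 = true := by
      rw [hdef]; show (if (1:Fin 6) = 0 then false else σ [] 1) = true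
      rw [if_neg (by decide)]; exact hb1
    have hc2 : σ' [] 2 = false := by
      rw [hdef]; show (if (2:Fin 6) = 0 then false else σ [] 2) = false
      rw [if_neg (by decide)]; exact hb2
    have hle := hnash 0 σ' hdiff
    have e0 := G1_reward_true σ hσ 0 0 hb0
    rw [show G1.tr 0 true = 1 from rfl] at e0
    have e1 := G1_reward_true σ hσ 0 1 hb1
    rw [show G1.tr 1 true = 2 from rfl] at e1
    have e2 := G1_reward_false σ hσ 0 2 (Or.inr (Or.inr rfl)) hb2
    rw [show G1.rew 0 2 false = (1:ℝ) from rfl] at e2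
    have e'0 := G1_reward_false σ' hσ' 0 0 (Or.inl rfl) hc0
    rw [show G1.rew 0 0 false = (2:ℝ) from rfl] at e'0
    have e'1 := G1_reward_true σ' hσ' 0 1 hc1
    rw [show G1.tr 1 true = 2 from rfl] at e'1
    have e'2 := G1_reward_false σ' hσ' 0 2 (Or.inr (Or.inr rfl)) hc2
    rw [show G1.rew 0 2 false = (1:ℝ) from rfl] at e'2
    have E := G1_ER_eq σ 0
    have E' := G1_ER_eq σ' 0
    linarith
  · -- case (true,true,true), player 0 deviates to false
    obtain ⟨hσ', hdiff⟩ := G1_dev σ hσ 0 false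
    set σ' : Profile (Fin 6) Bool := fun h v => if v = 0 then false else σ h v with hdef
    have hc0 : σ' [] 0 = false := by
      rw [hdef]; show (if (0:Fin 6) = 0 then false else σ [] 0) = false; rw [if_pos rfl]
    have hc1 : σ' [] 1 = true := by
      rw [hdef]; show (if (1:Fin 6) = 0 then false else σ [] 1) = true
      rw [if_neg (by decide)]; exact hb1
    have hc2 : σ' [] 2 = true := by
      rw [hdef]; show (if (2:Fin 6) = 0 then false else σ [] 2) = true
      rw [if_neg (by decide)]; exact hb2
    have hle := hnash 0 σ' hdiff
    have e0 := G1_reward_true σ hσ 0 0 hb0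
    rw [show G1.tr 0 true = 1 from rfl] at e0
    have e1 := G1_reward_true σ hσ 0 1 hb1
    rw [show G1.tr 1 true = 2 from rfl] at e1
    have e2 := G1_reward_true σ hσ 0 2 hb2
    rw [show G1.tr 2 true = 0 from rfl] at e2
    have e'0 := G1_reward_false σ' hσ' 0 0 (Or.inl rfl) hc0
    rw [show G1.rew 0 0 false = (2:ℝ) from rfl] at e'0
    have e'1 := G1_reward_true σ' hσ' 0 1 hc1
    rw [show G1.tr 1 true = 2 from rfl] at e'1
    have e'2 := G1_reward_true σ' hσ' 0 2 hc2
    rw [show G1.tr 2 true = 0 from rfl] at e'2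
    have E := G1_ER_eq σ 0
    have E' := G1_ER_eq σ' 0
    linarith
end

section
/- There exists a sequence x : ℕ → {0,1} with ∑_{i=0}^∞ x_i·(2/3)^i = 3/2; however, no eventually periodic sequence x : ℕ → {0,1} (i.e., no x for which there exist n ≥ 0 and m ≥ 1 with x_{i+m} = x_i for all i ≥ n) satisfies ∑_{i=0}^∞ x_i·(2/3)^i = 3/2. -/
open Finset

namespace DSAux

lemma summable_bin (x : ℕ → ℝ) (hx : ∀ i, x i = 0 ∨ x i = 1) (n : ℕ) :
    Summable (fun i : ℕ => x (n + i) * (2 / 3 : ℝ) ^ i) := by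
  refine Summable.of_nonneg_of_le ?_ ?_
    (summable_geometric_of_lt_one (r := (2/3:ℝ)) (by norm_num) (by norm_num))
  · intro i
    rcases hx (n + i) with h | h <;> simp [h]
    positivity
  · intro i
    rcases hx (n + i) with h | h <;> simp [h]
    positivity

noncomputable def r : ℕ → ℝ
  | 0 => 3 / 2
  | n + 1 => if 3 / 2 ≤ r n then 3 / 2 * (r n - 1) else 3 / 2 * r n

lemma r_succ (n : ℕ) :
    r (n + 1) = if 3 / 2 ≤ r n then 3 / 2 * (r n - 1) else 3 / 2 * r n := rfl

noncomputable def xg (n : ℕ) : ℝ := if 3 / 2 ≤ r n then 1 else 0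

lemma xg_bin (n : ℕ) : xg n = 0 ∨ xg n = 1 := by
  unfold xg; split <;> simp

lemma r_bounds (n : ℕ) : 0 ≤ r n ∧ r n ≤ 3 := by
  induction n with
  | zero => norm_num [r]
  | succ n ih =>
    rcases ih with ⟨h0, h3⟩
    rw [r_succ]
    split <;> constructor <;> linarith

lemma r_step (n : ℕ) : xg n + 2 / 3 * r (n + 1) = r n := by
  unfold xg
  rw [r_succ]
  split <;> ring

lemma invariant (n : ℕ) :
    (∑ i ∈ Finset.range n, xg i * (2 / 3 : ℝ) ^ i) + r n * (2 / 3) ^ n = 3 / 2 := by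
  induction n with
  | zero => simp [r]
  | succ n ih =>
    rw [Finset.sum_range_succ]
    have hstep := r_step n
    have h : xg n * (2/3:ℝ)^n + r (n+1) * (2/3)^(n+1) = r n * (2/3)^n := by
      rw [pow_succ]
      linear_combination (2/3:ℝ)^n * hstep
    linarith [ih, h]

lemma exists_seq : ∃ x : ℕ → ℝ, (∀ i, x i = 0 ∨ x i = 1) ∧
    ∑' i : ℕ, x i * (2 / 3) ^ i = 3 / 2 := by
  refine ⟨xg, xg_bin, ?_⟩
  have hs : Summable (fun i : ℕ => xg i * (2 / 3 : ℝ) ^ i) := by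
    simpa using summable_bin xg xg_bin 0
  have h2 : Filter.Tendsto (fun n : ℕ => r n * (2 / 3 : ℝ) ^ n)
      Filter.atTop (nhds 0) := by
    have hg : Filter.Tendsto (fun n : ℕ => 3 * (2/3:ℝ)^n) Filter.atTop (nhds 0) := by
      have := tendsto_pow_atTop_nhds_zero_of_lt_one
        (show (0:ℝ) ≤ 2/3 by norm_num) (show (2/3:ℝ) < 1 by norm_num)
      simpa using this.const_mul (3:ℝ)
    refine squeeze_zero (fun n => ?_) (fun n => ?_) hg
    · have h0 := (r_bounds n).1
      positivity
    · have h3 := (r_bounds n).2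
      have h4 : (0:ℝ) ≤ (2/3:ℝ)^n := by positivity
      nlinarith
  have hten : Filter.Tendsto (fun n => ∑ i ∈ Finset.range n, xg i * (2 / 3 : ℝ) ^ i)
      Filter.atTop (nhds (3 / 2)) := by
    have heq : (fun n => ∑ i ∈ Finset.range n, xg i * (2 / 3 : ℝ) ^ i)
        = fun n => 3/2 - r n * (2/3)^n := by
      funext n
      linarith [invariant n]
    rw [heq]
    have : Filter.Tendsto (fun n : ℕ => 3/2 - r n * (2/3:ℝ)^n) Filter.atTop
        (nhds (3/2 - 0)) := Filter.Tendsto.sub tendsto_const_nhds h2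
    simpa using this
  exact ((hs.hasSum_iff_tendsto_nat).mpr hten).tsum_eq

noncomputable def t (x : ℕ → ℝ) (n : ℕ) : ℝ := ∑' i : ℕ, x (n + i) * (2 / 3) ^ i

lemma t_rec (x : ℕ → ℝ) (hx : ∀ i, x i = 0 ∨ x i = 1) (n : ℕ) :
    t x n = x n + 2 / 3 * t x (n + 1) := by
  have hs := summable_bin x hx n
  have h0 := Summable.tsum_eq_zero_add hs
  have h1 : ∀ i : ℕ, x (n + (i + 1)) * (2 / 3 : ℝ) ^ (i + 1)
      = 2 / 3 * (x (n + 1 + i) * (2 / 3) ^ i) := by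
    intro i
    have h : n + (i + 1) = n + 1 + i := by omega
    rw [h, pow_succ]; ring
  unfold t
  rw [h0]
  simp only [h1]
  rw [tsum_mul_left]
  simp

lemma t_odd (x : ℕ → ℝ) (hx : ∀ i, x i = 0 ∨ x i = 1)
    (h0 : ∑' i : ℕ, x i * (2 / 3) ^ i = 3 / 2) (n : ℕ) :
    ∃ k : ℤ, Odd k ∧ t x n * 2 ^ (n + 1) = 3 * (k : ℝ) := by
  induction n with
  | zero =>
    refine ⟨1, odd_one, ?_⟩
    have h : t x 0 = 3 / 2 := by
      unfold t; simpa using h0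
    rw [h]; norm_num
  | succ n ih =>
    rcases ih with ⟨k, hk, hkeq⟩
    have hrec := t_rec x hx n
    have hodd3k : Odd (3 * k) := (by decide : Odd (3:ℤ)).mul hk
    have heven : Even ((2:ℤ) ^ (n + 1)) := Int.even_pow.mpr ⟨even_two, by omega⟩
    rcases hx n with hxn | hxn
    · refine ⟨3 * k, hodd3k, ?_⟩
      have h : t x (n + 1) = 3 / 2 * t x n := by rw [hrec, hxn]; ring
      rw [h]
      push_cast
      linear_combination (3:ℝ) * hkeq
    · refine ⟨3 * k - 2 ^ (n + 1), hodd3k.sub_even heven, ?_⟩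
      have h : t x (n + 1) = 3 / 2 * (t x n - 1) := by rw [hrec, hxn]; ring
      rw [h]
      push_cast
      linear_combination (3:ℝ) * hkeq

end DSAux

/-- There is a binary sequence `x : ℕ → {0,1}` whose discounted sum with
discount factor `2/3` equals `3/2`, but no eventually periodic binary
sequence has this discounted sum. -/
theorem discounted_sum_three_halves_needs_aperiodic_sequence :
    (∃ x : ℕ → ℝ, (∀ i, x i = 0 ∨ x i = 1) ∧
      ∑' i : ℕ, x i * (2 / 3) ^ i = 3 / 2) ∧
    (∀ x : ℕ → ℝ, (∀ i, x i = 0 ∨ x i = 1) →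
      (∃ (n m : ℕ), 1 ≤ m ∧ ∀ i, n ≤ i → x (i + m) = x i) →
      ∑' i : ℕ, x i * (2 / 3) ^ i ≠ 3 / 2) := by
  constructor
  · exact DSAux.exists_seq
  · rintro x hx ⟨n, m, hm, hper⟩ hsum
    have hteq : DSAux.t x n = DSAux.t x (n + m) := by
      unfold DSAux.t
      congr 1
      funext i
      have h := hper (n + i) (by omega)
      have h1 : n + i + m = n + m + i := by omega
      rw [← h1, h]
    obtain ⟨k, hk, hkeq⟩ := DSAux.t_odd x hx hsum n
    obtain ⟨k', hk', hkeq'⟩ := DSAux.t_odd x hx hsum (n + m)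
    have hcast : (3:ℝ) * (k:ℝ) * 2 ^ m = 3 * (k':ℝ) := by
      have h : DSAux.t x n * 2 ^ (n + 1) * 2 ^ m
          = DSAux.t x (n + m) * 2 ^ (n + m + 1) := by
        rw [hteq, mul_assoc, ← pow_add, show n + 1 + m = n + m + 1 from by omega]
      rw [hkeq, hkeq'] at h
      linarith [h]
    have hZ : k * 2 ^ m = k' := by
      have h : ((k * 2 ^ m : ℤ) : ℝ) = ((k' : ℤ) : ℝ) := by push_cast; linarith [hcast]
      exact_mod_cast h
    have hev : Even k' := by
      rw [← hZ]
      exact (Int.even_pow.mpr ⟨even_two, by omega⟩).mul_left k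
    exact (Int.not_even_iff_odd.mpr hk') hev
end

section
/- Let an MDSG with designated leader l be given, and let C ⊆ D be the set of stationary mixed decision vectors d such that for every player p ≠ l and every vertex v owned by p, E_p(d,v) ≥ r̲_p(v). If C is nonempty, then there exists d* ∈ C maximizing the leader's expected reward ∑_{v∈V} Δ(v)·E_l(d,v) over C; i.e., an optimal stationary mixed leader strategy profile satisfying the equilibrium constraints exists. (Applied to the product of an MDSG with a finite memory set, this yields the existence of an optimal mixed leader strategy profile with any predefined memory bound.) -/
open scoped BigOperators

lemma mdsg_aux_bound {V A : Type} [Fintype V] [Fintype A] [Nonempty V]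
    (tr : V → A → V) (c : V → A → ℝ) (lam R : ℝ) (hl0 : 0 ≤ lam) (hl1 : lam < 1)
    (hR : ∀ v a, |c v a| ≤ R)
    (d : V → A → ℝ) (hd0 : ∀ v a, 0 ≤ d v a) (hd1 : ∀ v, ∑ a, d v a = 1)
    (f : V → ℝ) (hf : ∀ v, f v = ∑ a, d v a * (c v a + lam * f (tr v a))) :
    ∀ v, |f v| ≤ R / (1 - lam) := by
  have h1 : (0:ℝ) < 1 - lam := by linarith
  set D := Finset.univ.sup' Finset.univ_nonempty (fun v => |f v|) with hD
  have hle : ∀ v, |f v| ≤ D := fun v => hD ▸ Finset.le_sup' (fun v => |f v|) (Finset.mem_univ v)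
  have key : ∀ v, |f v| ≤ R + lam * D := by
    intro v
    rw [hf v]
    calc |∑ a, d v a * (c v a + lam * f (tr v a))|
        ≤ ∑ a, |d v a * (c v a + lam * f (tr v a))| := Finset.abs_sum_le_sum_abs _ _
      _ ≤ ∑ a, d v a * (R + lam * D) := by
          apply Finset.sum_le_sum
          intro a _
          rw [abs_mul, abs_of_nonneg (hd0 v a)]
          apply mul_le_mul_of_nonneg_left _ (hd0 v a)
          calc |c v a + lam * f (tr v a)| ≤ |c v a| + |lam * f (tr v a)| := abs_add_le _ _
            _ ≤ R + lam * D := by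
                rw [abs_mul, abs_of_nonneg hl0]
                exact add_le_add (hR v a) (mul_le_mul_of_nonneg_left (hle _) hl0)
      _ = R + lam * D := by rw [← Finset.sum_mul, hd1 v, one_mul]
  have hDle : D ≤ R / (1 - lam) := by
    obtain ⟨v0, _, hv0⟩ := Finset.exists_mem_eq_sup' Finset.univ_nonempty (fun v => |f v|)
    rw [le_div_iff₀ h1]
    have := key v0
    rw [hD, hv0]
    nlinarith [hv0 ▸ key v0]
  exact fun v => (hle v).trans hDle

lemma mdsg_aux_lip {V A : Type} [Fintype V] [Fintype A] [Nonempty V] [Nonempty A]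
    (tr : V → A → V) (c : V → A → ℝ) (lam M eps : ℝ) (hl0 : 0 ≤ lam) (hl1 : lam < 1)
    (hM0 : 0 ≤ M)
    (d d' : V → A → ℝ) (hd0 : ∀ v a, 0 ≤ d v a) (hd1 : ∀ v, ∑ a, d v a = 1)
    (f f' : V → ℝ)
    (hf : ∀ v, f v = ∑ a, d v a * (c v a + lam * f (tr v a)))
    (hf' : ∀ v, f' v = ∑ a, d' v a * (c v a + lam * f' (tr v a)))
    (hM : ∀ v a, |c v a + lam * f' (tr v a)| ≤ M)
    (heps : ∀ v a, |d v a - d' v a| ≤ eps) :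
    ∀ v, |f v - f' v| ≤ (Fintype.card A * M * eps) / (1 - lam) := by
  have h1 : (0:ℝ) < 1 - lam := by linarith
  have heps0 : 0 ≤ eps := le_trans (abs_nonneg _) (heps Classical.ofNonempty Classical.ofNonempty)
  set D := Finset.univ.sup' Finset.univ_nonempty (fun v => |f v - f' v|) with hD
  have hle : ∀ v, |f v - f' v| ≤ D := fun v => hD ▸ Finset.le_sup' (fun v => |f v - f' v|) (Finset.mem_univ v)
  have key : ∀ v, |f v - f' v| ≤ Fintype.card A * M * eps + lam * D := by
    intro v
    have hsplit : f v - f' v = ∑ a, ((d v a - d' v a) * (c v a + lam * f' (tr v a))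
        + d v a * (lam * (f (tr v a) - f' (tr v a)))) := by
      rw [hf v, hf' v, ← Finset.sum_sub_distrib]
      apply Finset.sum_congr rfl
      intro a _
      ring
    rw [hsplit]
    calc |∑ a, ((d v a - d' v a) * (c v a + lam * f' (tr v a))
            + d v a * (lam * (f (tr v a) - f' (tr v a))))|
        ≤ ∑ a, |(d v a - d' v a) * (c v a + lam * f' (tr v a))
            + d v a * (lam * (f (tr v a) - f' (tr v a)))| := Finset.abs_sum_le_sum_abs _ _
      _ ≤ ∑ a, (M * eps + d v a * (lam * D)) := by
          apply Finset.sum_le_sum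
          intro a _
          calc |(d v a - d' v a) * (c v a + lam * f' (tr v a))
                + d v a * (lam * (f (tr v a) - f' (tr v a)))|
              ≤ |(d v a - d' v a) * (c v a + lam * f' (tr v a))|
                + |d v a * (lam * (f (tr v a) - f' (tr v a)))| := abs_add_le _ _
            _ ≤ M * eps + d v a * (lam * D) := by
                apply add_le_add
                · rw [abs_mul, mul_comm M eps]
                  exact mul_le_mul (heps v a) (hM v a) (abs_nonneg _) heps0
                · rw [abs_mul, abs_of_nonneg (hd0 v a), abs_mul, abs_of_nonneg hl0]
                  exact mul_le_mul_of_nonneg_left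
                    (mul_le_mul_of_nonneg_left (hle _) hl0) (hd0 v a)
      _ = Fintype.card A * M * eps + lam * D := by
          rw [Finset.sum_add_distrib, Finset.sum_const, ← Finset.sum_mul, hd1 v]
          simp [Finset.card_univ]
          ring
  have hDle : D ≤ (Fintype.card A * M * eps) / (1 - lam) := by
    obtain ⟨v0, _, hv0⟩ := Finset.exists_mem_eq_sup' Finset.univ_nonempty
      (fun v => |f v - f' v|)
    rw [le_div_iff₀ h1]
    nlinarith [hv0 ▸ key v0]
  exact fun v => (hle v).trans hDle

lemma mdsg_aux_cont {V A : Type} [Fintype V] [Fintype A] [Nonempty V] [Nonempty A]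
    (tr : V → A → V) (c : V → A → ℝ) (lam : ℝ) (hl0 : 0 ≤ lam) (hl1 : lam < 1)
    (E : (V → A → ℝ) → V → ℝ)
    (hE : ∀ d, (∀ v a, 0 ≤ d v a) → (∀ v, ∑ a, d v a = 1) →
      ∀ v, E d v = ∑ a, d v a * (c v a + lam * E d (tr v a)))
    (v : V) :
    ContinuousOn (fun d => E d v)
      {d : V → A → ℝ | (∀ v a, 0 ≤ d v a) ∧ ∀ v, ∑ a, d v a = 1} := by
  have h1 : (0:ℝ) < 1 - lam := by linarith
  set R := Finset.univ.sup' Finset.univ_nonempty (fun q : V × A => |c q.1 q.2|) with hRdef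
  have hR : ∀ w a, |c w a| ≤ R := fun w a =>
    hRdef ▸ Finset.le_sup' (fun q : V × A => |c q.1 q.2|) (Finset.mem_univ (w, a))
  have hR0 : 0 ≤ R := le_trans (abs_nonneg _) (hR Classical.ofNonempty Classical.ofNonempty)
  set M := R + lam * (R / (1 - lam)) with hMdef
  have hM0 : 0 ≤ M := by
    rw [hMdef]
    have h2 : 0 ≤ R / (1 - lam) := div_nonneg hR0 h1.le
    nlinarith
  set K := Fintype.card A * M / (1 - lam) with hKdef
  have hK0 : 0 ≤ K := by
    apply div_nonneg _ h1.le
    positivity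
  rw [Metric.continuousOn_iff]
  intro d hd eps heps
  refine ⟨eps / (K + 1), by positivity, ?_⟩
  intro d' hd' hdist
  have hMbd : ∀ w a, |c w a + lam * E d (tr w a)| ≤ M := by
    intro w a
    calc |c w a + lam * E d (tr w a)| ≤ |c w a| + |lam * E d (tr w a)| := abs_add_le _ _
      _ ≤ M := by
          rw [abs_mul, abs_of_nonneg hl0, hMdef]
          exact add_le_add (hR w a) (mul_le_mul_of_nonneg_left
            (mdsg_aux_bound tr c lam R hl0 hl1 hR d (fun w a => hd.1 w a) hd.2
              (E d) (hE d hd.1 hd.2) _) hl0)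
  have hdvals : ∀ w a, |d' w a - d w a| ≤ dist d' d := by
    intro w a
    have h2 : dist (d' w a) (d w a) ≤ dist (d' w) (d w) := dist_le_pi_dist (d' w) (d w) a
    have h3 : dist (d' w) (d w) ≤ dist d' d := dist_le_pi_dist d' d w
    rw [Real.dist_eq] at h2
    exact h2.trans h3
  have hlip : |E d' v - E d v| ≤ (Fintype.card A * M * dist d' d) / (1 - lam) :=
    mdsg_aux_lip tr c lam M (dist d' d) hl0 hl1 hM0 d' d (fun w a => hd'.1 w a) hd'.2
      (E d') (E d) (hE d' hd'.1 hd'.2) (hE d hd.1 hd.2) hMbd hdvals v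
  have hKd : (Fintype.card A * M * dist d' d) / (1 - lam) = K * dist d' d := by
    rw [hKdef]; ring
  rw [Real.dist_eq]
  calc |E d' v - E d v| ≤ K * dist d' d := by rw [← hKd]; exact hlip
    _ ≤ K * (eps / (K + 1)) := mul_le_mul_of_nonneg_left hdist.le hK0
    _ < eps := by
        rw [mul_comm, div_mul_eq_mul_div, div_lt_iff₀ (by linarith)]
        nlinarith

open MDSG in
/-- Let an MDSG with designated leader `l` be given, and let `C` be the set of
stationary mixed decision vectors `d` such that for every player `p ≠ l` and
every vertex `v` owned by `p`, the expected discounted reward `E d p v`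
(characterized by the fixed-point equations) is at least the lower value of
`p` at `v`.  If `C` is nonempty, then some `d ∈ C` maximizes the leader's
expected reward `∑ v, init v * E d l v` over `C`: an optimal stationary mixed
leader strategy profile satisfying the equilibrium constraints exists. -/
theorem optimal_constrained_stationary_mixed_profile_exists
    {P V A : Type} (G : MDSG P V A) (l : P)
    (E : (V → A → ℝ) → P → V → ℝ)
    (hE : ∀ d ∈ simplexD V A, ∀ (p : P) (v : V),
      E d p v = ∑' a : A, d v a * (G.rew p v a + G.disc * E d p (G.tr v a)))
    (hne : ∃ d ∈ simplexD V A, ∀ p : P, p ≠ l → ∀ v : V,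
      G.owner v = p → G.lowerValue p v ≤ E d p v) :
    ∃ d, (d ∈ simplexD V A ∧ ∀ p : P, p ≠ l → ∀ v : V,
        G.owner v = p → G.lowerValue p v ≤ E d p v) ∧
      ∀ d', (d' ∈ simplexD V A ∧ ∀ p : P, p ≠ l → ∀ v : V,
          G.owner v = p → G.lowerValue p v ≤ E d' p v) →
        ∑' v : V, G.init v * E d' l v ≤ ∑' v : V, G.init v * E d l v := by
  obtain ⟨d0, hd0S, hd0C⟩ := hne
  have finV := G.fin_V
  have finA := G.fin_A
  have hA : Nonempty A := G.nonempty_A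
  cases isEmpty_or_nonempty V with
  | inl hV =>
      exact ⟨d0, ⟨hd0S, hd0C⟩, fun d' _ => by rw [tsum_empty, tsum_empty]⟩
  | inr hV =>
      letI : Finite V := finV
      letI : Finite A := finA
      letI : Fintype V := Fintype.ofFinite V
      letI : Fintype A := Fintype.ofFinite A
      set S : Set (V → A → ℝ) :=
        {d | (∀ v a, 0 ≤ d v a) ∧ ∀ v, ∑ a, d v a = 1} with hSdef
      have hSsimplex : ∀ d, d ∈ simplexD V A ↔ d ∈ S := by
        intro d
        constructor
        · intro h
          exact ⟨fun v a => (h v).1 a, fun v => by rw [← tsum_fintype (L := SummationFilter.unconditional _)]; exact (h v).2⟩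
        · intro h v
          exact ⟨fun a => h.1 v a, by rw [tsum_fintype]; exact h.2 v⟩
      have hEfin : ∀ d ∈ S, ∀ (p : P) (v : V),
          E d p v = ∑ a, d v a * (G.rew p v a + G.disc * E d p (G.tr v a)) := by
        intro d hd p v
        rw [← tsum_fintype (L := SummationFilter.unconditional _)]
        exact hE d ((hSsimplex d).mpr hd) p v
      have hcont : ∀ (p : P) (v : V), ContinuousOn (fun d => E d p v) S :=
        fun p v => mdsg_aux_cont G.tr (G.rew p) G.disc G.disc_pos.le G.disc_lt_one
          (fun d v => E d p v) (fun d h1 h2 v => hEfin d ⟨h1, h2⟩ p v) v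
      have hclosed : IsClosed S := by
        have hrw : S = (⋂ (v : V) (a : A), {d : V → A → ℝ | 0 ≤ d v a}) ∩
            ⋂ (v : V), {d : V → A → ℝ | ∑ a, d v a = 1} := by
          ext d
          simp only [Set.mem_inter_iff, Set.mem_iInter, Set.mem_setOf_eq, hSdef]
        rw [hrw]
        apply IsClosed.inter
        · exact isClosed_iInter fun v => isClosed_iInter fun a =>
            isClosed_le continuous_const ((continuous_apply a).comp (continuous_apply v))
        · exact isClosed_iInter fun v => isClosed_eq
            (continuous_finset_sum Finset.univ
              (fun a _ => (continuous_apply a).comp (continuous_apply v)))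
            continuous_const
      have hScompact : IsCompact S := by
        apply IsCompact.of_isClosed_subset
          (isCompact_univ_pi (fun _ : V => isCompact_univ_pi
            (fun _ : A => isCompact_Icc (a := (0:ℝ)) (b := 1)))) hclosed
        intro d hd
        rw [Set.mem_univ_pi]
        intro v
        rw [Set.mem_univ_pi]
        intro a
        refine ⟨hd.1 v a, ?_⟩
        rw [← hd.2 v]
        exact Finset.single_le_sum (fun a' _ => hd.1 v a') (Finset.mem_univ a)
      set C : Set (V → A → ℝ) :=
        {d | d ∈ S ∧ ∀ p : P, p ≠ l → ∀ v : V,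
          G.owner v = p → G.lowerValue p v ≤ E d p v} with hCdef
      have hCsub : C ⊆ S := fun d hd => hd.1
      have hCeq : C = ⋂ q : P × V, (S ∩ {d | q.1 ≠ l → G.owner q.2 = q.1 →
          G.lowerValue q.1 q.2 ≤ E d q.1 q.2}) := by
        ext d
        simp only [hCdef, Set.mem_iInter, Set.mem_inter_iff, Set.mem_setOf_eq]
        constructor
        · rintro ⟨h1, h2⟩ q
          exact ⟨h1, fun hq hq2 => h2 q.1 hq q.2 hq2⟩
        · intro h
          exact ⟨(h (l, Classical.ofNonempty)).1, fun p hp v hv => (h (p, v)).2 hp hv⟩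
      have hCclosed : IsClosed C := by
        rw [hCeq]
        apply isClosed_iInter
        intro q
        by_cases hq : q.1 ≠ l ∧ G.owner q.2 = q.1
        · have hrw : {d : V → A → ℝ | q.1 ≠ l → G.owner q.2 = q.1 →
              G.lowerValue q.1 q.2 ≤ E d q.1 q.2}
              = (fun d => E d q.1 q.2) ⁻¹' Set.Ici (G.lowerValue q.1 q.2) := by
            ext d
            simp [hq.1, hq.2, Set.mem_Ici]
          rw [hrw]
          exact (hcont q.1 q.2).preimage_isClosed_of_isClosed hclosed isClosed_Ici
        · have hrw : {d : V → A → ℝ | q.1 ≠ l → G.owner q.2 = q.1 →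
              G.lowerValue q.1 q.2 ≤ E d q.1 q.2} = Set.univ := by
            ext d
            simp only [Set.mem_setOf_eq, Set.mem_univ, iff_true]
            intro h1 h2
            exact absurd ⟨h1, h2⟩ hq
          rw [hrw, Set.inter_univ]
          exact hclosed
      have hCcompact : IsCompact C := hScompact.of_isClosed_subset hCclosed hCsub
      have hCne : C.Nonempty := ⟨d0, (hSsimplex d0).mp hd0S, hd0C⟩
      have hphi : ContinuousOn (fun d => ∑ v : V, G.init v * E d l v) C :=
        (continuousOn_finset_sum Finset.univ (fun v _ =>
          continuousOn_const.mul (hcont l v))).mono hCsub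
      obtain ⟨d, hdC, hmax⟩ := hCcompact.exists_isMaxOn hCne hphi
      refine ⟨d, ⟨(hSsimplex d).mpr hdC.1, hdC.2⟩, ?_⟩
      intro d' hd'
      rw [tsum_fintype, tsum_fintype]
      exact hmax ⟨(hSsimplex d').mp hd'.1, hd'.2⟩
end
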